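/- arXiv:1806.03269 — 7 statements merged into one kernel-verified Lean document; each statement's English description precedes it below -/
import Mathlib

section
/- Let 0 < α < 1, B > 0, T > 0 and let m be a positive integer with mα > 2. Then the function z : [0,T] → ℝ defined by z(t) = ∑_{n=m+1}^∞ (−B)^n t^{αn} / Γ(αn + 1) is twice continuously differentiable on [0,T] (i.e. z ∈ C²[0,T], with one-sided derivatives at the endpoints). -/
private lemma tail_aux_sq_le (j : ℕ) : ((j : ℝ) + 2) ^ 2 ≤ 4 * 4 ^ j := by
  induction j with
  | zero => norm_num
  | succ j ih =>
    have hj : (0 : ℝ) ≤ (j : ℝ) := Nat.cast_nonneg j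
    have h4 : (4:ℝ) ^ (j + 1) = 4 * 4 ^ j := by rw [pow_succ]; ring
    push_cast
    rw [h4]
    push_cast at ih
    nlinarith [ih, hj]

/-- Summability of the dominating series. -/
private lemma tail_aux_summable (α B R : ℝ) (m : ℕ) (hα0 : 0 < α)
    (hB : 0 < B) (hR : 1 ≤ R) (hβ : ∀ n : ℕ, 2 < α * ((m : ℝ) + 1 + n)) :
    Summable (fun n : ℕ => B ^ (m + 1 + n) *
      ((α * ((m : ℝ) + 1 + n)) ^ 2 * R ^ (α * ((m : ℝ) + 1 + n))) /
      Real.Gamma (α * ((m : ℝ) + 1 + n) + 1)) := by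
  have hΓpos : ∀ n : ℕ, 0 < Real.Gamma (α * ((m : ℝ) + 1 + n) + 1) := fun n =>
    Real.Gamma_pos_of_pos (by nlinarith [hβ n])
  have hR0 : (0 : ℝ) ≤ R := by linarith
  set Q : ℝ := (max B 1) ^ ((1 : ℝ)/α) * R with hQdef
  have hmax1 : (1 : ℝ) ≤ max B 1 := le_max_right B 1
  have hmax0 : (0 : ℝ) ≤ max B 1 := by linarith
  have hQ1 : 1 ≤ Q := by
    have h1 : (1:ℝ) ≤ (max B 1) ^ ((1 : ℝ)/α) :=
      Real.one_le_rpow hmax1 (by positivity)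
    nlinarith
  have hQ0 : 0 < Q := lt_of_lt_of_le one_pos hQ1
  set A : ℝ := 4 * Q ^ 2 * Real.exp (8 * Q) with hAdef
  have hA0 : 0 ≤ A := by positivity
  set r : ℝ := (1/2 : ℝ) ^ α with hrdef
  have hr1 : r < 1 := Real.rpow_lt_one (by norm_num) (by norm_num) hα0
  have hr0 : 0 ≤ r := Real.rpow_nonneg (by norm_num) _
  have hm2 : 2 < α * ((m : ℝ) + 1) := by simpa using hβ 0
  have key : ∀ n : ℕ, B ^ (m + 1 + n) *
      ((α * ((m : ℝ) + 1 + n)) ^ 2 * R ^ (α * ((m : ℝ) + 1 + n))) /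
      Real.Gamma (α * ((m : ℝ) + 1 + n) + 1) ≤ A * r ^ n := by
    intro n
    set b : ℝ := α * ((m : ℝ) + 1 + n) with hbdef
    have h2 : 2 < b := hβ n
    have hb0 : (0:ℝ) ≤ b := by linarith
    set j : ℕ := ⌊b⌋₊ - 1 with hjdef
    have hfl : 2 ≤ ⌊b⌋₊ := Nat.le_floor (by exact_mod_cast h2.le)
    have hj1 : 1 ≤ j := by omega
    have hjfl : j + 1 = ⌊b⌋₊ := by omega
    have hjβ : (j : ℝ) + 1 ≤ b := by
      have h := Nat.floor_le hb0
      rw [← hjfl] at h; push_cast at h; linarith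
    have hβj : b ≤ (j : ℝ) + 2 := by
      have h := Nat.lt_floor_add_one b
      rw [← hjfl] at h; push_cast at h; linarith
    have hαnj : α * n ≤ (j : ℝ) := by
      have hexp : b = α * ((m : ℝ) + 1) + α * n := by rw [hbdef]; ring
      linarith
    -- Gamma lower bound
    have hΓ : (j.factorial : ℝ) ≤ Real.Gamma (b + 1) := by
      have h1 : Real.Gamma ((j : ℝ) + 1) = (j.factorial : ℝ) := Real.Gamma_nat_eq_factorial j
      rw [← h1]
      have hjR : (1:ℝ) ≤ (j:ℝ) := by exact_mod_cast hj1
      exact Real.Gamma_strictMonoOn_Ici.monotoneOn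
        (Set.mem_Ici.2 (by linarith)) (Set.mem_Ici.2 (by linarith)) (by linarith)
    have hfact : (0:ℝ) < (j.factorial : ℝ) := by
      exact_mod_cast Nat.factorial_pos j
    -- numerator bound
    have hnum : B ^ (m + 1 + n) * (b ^ 2 * R ^ b) ≤ Q ^ (j + 2) * ((j : ℝ) + 2) ^ 2 := by
      have a1 : B ^ (m + 1 + n) ≤ ((max B 1) ^ ((1:ℝ)/α)) ^ ((j : ℝ) + 2) := by
        calc B ^ (m + 1 + n) ≤ (max B 1) ^ (m + 1 + n) :=
              pow_le_pow_left₀ hB.le (le_max_left B 1) _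
          _ = (max B 1) ^ ((m + 1 + n : ℕ) : ℝ) := (Real.rpow_natCast _ _).symm
          _ ≤ (max B 1) ^ (((j : ℝ) + 2) / α) := by
              apply Real.rpow_le_rpow_of_exponent_le hmax1
              rw [le_div_iff₀ hα0]
              have : ((m + 1 + n : ℕ) : ℝ) * α = b := by rw [hbdef]; push_cast; ring
              linarith [hβj, this.le, this.ge]
          _ = ((max B 1) ^ ((1:ℝ)/α)) ^ ((j : ℝ) + 2) := by
              rw [← Real.rpow_mul hmax0]
              congr 1
              field_simp
      have a2 : b ^ 2 ≤ ((j : ℝ) + 2) ^ 2 := by nlinarith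
      have a3 : R ^ b ≤ R ^ ((j : ℝ) + 2) := Real.rpow_le_rpow_of_exponent_le hR hβj
      have hQpow : Q ^ (j + 2) = ((max B 1) ^ ((1:ℝ)/α)) ^ ((j : ℝ) + 2) * R ^ ((j : ℝ) + 2) := by
        rw [hQdef, ← Real.mul_rpow (by positivity) hR0]
        rw [show ((j : ℝ) + 2) = ((j + 2 : ℕ) : ℝ) by push_cast; ring, Real.rpow_natCast]
      calc B ^ (m + 1 + n) * (b ^ 2 * R ^ b)
          ≤ ((max B 1) ^ ((1:ℝ)/α)) ^ ((j : ℝ) + 2) * (((j : ℝ) + 2) ^ 2 * R ^ ((j : ℝ) + 2)) := by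
            apply mul_le_mul a1 (mul_le_mul a2 a3 (by positivity) (by positivity))
              (by positivity) (by positivity)
        _ = Q ^ (j + 2) * ((j : ℝ) + 2) ^ 2 := by rw [hQpow]; ring
    have h2j : ((2:ℝ)) ^ j ≠ 0 := by positivity
    have hfj : (j.factorial : ℝ) ≠ 0 := hfact.ne'
    calc B ^ (m + 1 + n) * (b ^ 2 * R ^ b) / Real.Gamma (b + 1)
        ≤ Q ^ (j + 2) * ((j : ℝ) + 2) ^ 2 / (j.factorial : ℝ) := by
          apply div_le_div₀ (by positivity) hnum hfact hΓ
      _ ≤ Q ^ (j + 2) * (4 * 4 ^ j) / (j.factorial : ℝ) := by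
          gcongr
          exact tail_aux_sq_le j
      _ = (4 * Q ^ 2) * ((8 * Q) ^ j / (j.factorial : ℝ)) * (1/2 : ℝ) ^ j := by
          have h8 : (8 * Q) ^ j = 4 ^ j * 2 ^ j * Q ^ j := by
            rw [mul_pow, show (8:ℝ) = 4 * 2 by norm_num, mul_pow]
          rw [pow_add]
          field_simp
          rw [← mul_pow, ← mul_pow]
          congr 1; ring
      _ ≤ (4 * Q ^ 2) * Real.exp (8 * Q) * (1/2 : ℝ) ^ j := by
          gcongr
          exact Real.pow_div_factorial_le_exp (x := 8 * Q) (hx := by nlinarith [hQ0]) (n := j)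
      _ = A * (1/2 : ℝ) ^ j := by rw [hAdef]
      _ ≤ A * r ^ n := by
          apply mul_le_mul_of_nonneg_left _ hA0
          calc (1/2 : ℝ) ^ j = (1/2 : ℝ) ^ (j : ℝ) := (Real.rpow_natCast _ j).symm
            _ ≤ (1/2 : ℝ) ^ (α * n) :=
                Real.rpow_le_rpow_of_exponent_ge (by norm_num) (by norm_num) hαnj
            _ = r ^ n := by
                rw [hrdef, Real.rpow_mul (by norm_num : (0:ℝ) ≤ 1/2), Real.rpow_natCast]
  refine Summable.of_nonneg_of_le (fun n => ?_) key
    ((summable_geometric_of_lt_one hr0 hr1).mul_left A)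
  have := hΓpos n
  have hb0 : (0:ℝ) ≤ α * ((m : ℝ) + 1 + n) := by nlinarith [hβ n]
  apply div_nonneg _ (hΓpos n).le
  apply mul_nonneg (pow_nonneg hB.le _)
  exact mul_nonneg (sq_nonneg _) (Real.rpow_nonneg hR0 _)

/-- generic bound for the terms and their derivatives -/
private lemma tail_abs_term_le (B G w x q b R : ℝ) (k : ℕ) (hB : 0 ≤ B) (hG : 0 < G)
    (hw : |w| ≤ b ^ 2) (hq0 : 0 ≤ q) (hqb : q ≤ b) (hR : 1 ≤ R) (hx : |x| ≤ R) :
    |(-B) ^ k * (w * x ^ q) / G| ≤ B ^ k * (b ^ 2 * R ^ b) / G := by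
  have hxq : |x ^ q| ≤ R ^ b :=
    calc |x ^ q| ≤ |x| ^ q := Real.abs_rpow_le_abs_rpow x q
      _ ≤ R ^ q := Real.rpow_le_rpow (abs_nonneg x) hx hq0
      _ ≤ R ^ b := Real.rpow_le_rpow_of_exponent_le hR hqb
  rw [abs_div, abs_of_pos hG, abs_mul, abs_pow, abs_neg, abs_of_nonneg hB, abs_mul]
  gcongr

/-- Theorem 2 of the paper: the tail `z(t) = ∑_{n=m+1}^∞ (−B)^n t^{αn} / Γ(αn+1)` of the
Mittag-Leffler series is twice continuously differentiable on `[0,T]` when `mα > 2`. -/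
theorem tail_contDiffOn_two (α B T : ℝ) (m : ℕ)
    (hα0 : 0 < α) (hα1 : α < 1) (hB : 0 < B) (hT : 0 < T)
    (hm : 0 < m) (hmα : 2 < m * α) :
    ContDiffOn ℝ 2
      (fun t : ℝ => ∑' n : ℕ,
        (-B) ^ (m + 1 + n) * t ^ (α * ((m : ℝ) + 1 + n)) /
          Real.Gamma (α * ((m : ℝ) + 1 + n) + 1))
      (Set.Icc 0 T) := by
  have hβ : ∀ n : ℕ, 2 < α * ((m : ℝ) + 1 + n) := by
    intro n
    have hn : (0:ℝ) ≤ n := Nat.cast_nonneg n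
    nlinarith
  have hΓpos : ∀ n : ℕ, 0 < Real.Gamma (α * ((m : ℝ) + 1 + n) + 1) := fun n =>
    Real.Gamma_pos_of_pos (by nlinarith [hβ n])
  set R : ℝ := T + 1 with hRdef
  have hR1 : 1 ≤ R := by rw [hRdef]; linarith
  have hsub : Set.Icc (0:ℝ) T ⊆ Set.Ioo (-R) R := by
    intro x hx
    constructor
    · have := hx.1; rw [hRdef]; linarith
    · have := hx.2; rw [hRdef]; linarith
  have h0s : (0:ℝ) ∈ Set.Ioo (-R) R := ⟨by linarith, by linarith⟩
  have hxR : ∀ x ∈ Set.Ioo (-R) R, |x| ≤ R := fun x hx => (abs_lt.2 ⟨hx.1, hx.2⟩).le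
  have hu : Summable (fun n : ℕ => B ^ (m + 1 + n) *
      ((α * ((m : ℝ) + 1 + n)) ^ 2 * R ^ (α * ((m : ℝ) + 1 + n))) /
      Real.Gamma (α * ((m : ℝ) + 1 + n) + 1)) :=
    tail_aux_summable α B R m hα0 hB hR1 hβ
  -- first derivatives
  have hder1 : ∀ (n : ℕ) (x : ℝ), HasDerivAt
      (fun t : ℝ => (-B) ^ (m + 1 + n) * t ^ (α * ((m : ℝ) + 1 + n)) /
        Real.Gamma (α * ((m : ℝ) + 1 + n) + 1))
      ((-B) ^ (m + 1 + n) * (α * ((m : ℝ) + 1 + n) * x ^ (α * ((m : ℝ) + 1 + n) - 1)) /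
        Real.Gamma (α * ((m : ℝ) + 1 + n) + 1)) x := by
    intro n x
    exact ((Real.hasDerivAt_rpow_const (Or.inr (by linarith [hβ n]))).const_mul
      ((-B) ^ (m + 1 + n))).div_const _
  -- second derivatives
  have hder2 : ∀ (n : ℕ) (x : ℝ), HasDerivAt
      (fun t : ℝ => (-B) ^ (m + 1 + n) * (α * ((m : ℝ) + 1 + n) * t ^ (α * ((m : ℝ) + 1 + n) - 1)) /
        Real.Gamma (α * ((m : ℝ) + 1 + n) + 1))
      ((-B) ^ (m + 1 + n) * (α * ((m : ℝ) + 1 + n) *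
          ((α * ((m : ℝ) + 1 + n) - 1) * x ^ (α * ((m : ℝ) + 1 + n) - 2))) /
        Real.Gamma (α * ((m : ℝ) + 1 + n) + 1)) x := by
    intro n x
    have h := (((Real.hasDerivAt_rpow_const (x := x) (p := α * ((m : ℝ) + 1 + n) - 1)
      (Or.inr (by linarith [hβ n]))).const_mul (α * ((m : ℝ) + 1 + n))).const_mul
      ((-B) ^ (m + 1 + n))).div_const (Real.Gamma (α * ((m : ℝ) + 1 + n) + 1))
    rw [show α * ((m : ℝ) + 1 + n) - 1 - 1 = α * ((m : ℝ) + 1 + n) - 2 by ring] at h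
    exact h
  -- bounds
  have hbound0 : ∀ (n : ℕ) (x : ℝ), x ∈ Set.Ioo (-R) R →
      ‖(-B) ^ (m + 1 + n) * x ^ (α * ((m : ℝ) + 1 + n)) /
        Real.Gamma (α * ((m : ℝ) + 1 + n) + 1)‖ ≤
      B ^ (m + 1 + n) * ((α * ((m : ℝ) + 1 + n)) ^ 2 * R ^ (α * ((m : ℝ) + 1 + n))) /
        Real.Gamma (α * ((m : ℝ) + 1 + n) + 1) := by
    intro n x hx
    rw [Real.norm_eq_abs, show (-B) ^ (m + 1 + n) * x ^ (α * ((m : ℝ) + 1 + n)) =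
      (-B) ^ (m + 1 + n) * ((1:ℝ) * x ^ (α * ((m : ℝ) + 1 + n))) by ring]
    exact tail_abs_term_le B _ 1 x _ _ R _ hB.le (hΓpos n)
      (by rw [abs_one]; nlinarith [hβ n]) (by linarith [hβ n]) le_rfl hR1 (hxR x hx)
  have hbound1 : ∀ (n : ℕ) (x : ℝ), x ∈ Set.Ioo (-R) R →
      ‖(-B) ^ (m + 1 + n) * (α * ((m : ℝ) + 1 + n) * x ^ (α * ((m : ℝ) + 1 + n) - 1)) /
        Real.Gamma (α * ((m : ℝ) + 1 + n) + 1)‖ ≤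
      B ^ (m + 1 + n) * ((α * ((m : ℝ) + 1 + n)) ^ 2 * R ^ (α * ((m : ℝ) + 1 + n))) /
        Real.Gamma (α * ((m : ℝ) + 1 + n) + 1) := by
    intro n x hx
    rw [Real.norm_eq_abs]
    exact tail_abs_term_le B _ _ x _ _ R _ hB.le (hΓpos n)
      (by rw [abs_of_pos (by linarith [hβ n])]; nlinarith [hβ n])
      (by linarith [hβ n]) (by linarith [hβ n]) hR1 (hxR x hx)
  have hbound2 : ∀ (n : ℕ) (x : ℝ), x ∈ Set.Ioo (-R) R →
      ‖(-B) ^ (m + 1 + n) * (α * ((m : ℝ) + 1 + n) *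
          ((α * ((m : ℝ) + 1 + n) - 1) * x ^ (α * ((m : ℝ) + 1 + n) - 2))) /
        Real.Gamma (α * ((m : ℝ) + 1 + n) + 1)‖ ≤
      B ^ (m + 1 + n) * ((α * ((m : ℝ) + 1 + n)) ^ 2 * R ^ (α * ((m : ℝ) + 1 + n))) /
        Real.Gamma (α * ((m : ℝ) + 1 + n) + 1) := by
    intro n x hx
    rw [Real.norm_eq_abs, show (-B) ^ (m + 1 + n) * (α * ((m : ℝ) + 1 + n) *
          ((α * ((m : ℝ) + 1 + n) - 1) * x ^ (α * ((m : ℝ) + 1 + n) - 2))) =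
      (-B) ^ (m + 1 + n) * ((α * ((m : ℝ) + 1 + n) * (α * ((m : ℝ) + 1 + n) - 1)) *
        x ^ (α * ((m : ℝ) + 1 + n) - 2)) by ring]
    exact tail_abs_term_le B _ _ x _ _ R _ hB.le (hΓpos n)
      (by rw [abs_of_pos (by nlinarith [hβ n])]; nlinarith [hβ n])
      (by linarith [hβ n]) (by linarith [hβ n]) hR1 (hxR x hx)
  -- summability at 0
  have hf0 : Summable (fun n : ℕ => (-B) ^ (m + 1 + n) * (0:ℝ) ^ (α * ((m : ℝ) + 1 + n)) /
      Real.Gamma (α * ((m : ℝ) + 1 + n) + 1)) := by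
    apply summable_zero.congr
    intro n
    rw [Real.zero_rpow (by nlinarith [hβ n] : α * ((m : ℝ) + 1 + n) ≠ 0)]
    ring
  have hg0 : Summable (fun n : ℕ => (-B) ^ (m + 1 + n) *
      (α * ((m : ℝ) + 1 + n) * (0:ℝ) ^ (α * ((m : ℝ) + 1 + n) - 1)) /
      Real.Gamma (α * ((m : ℝ) + 1 + n) + 1)) := by
    apply summable_zero.congr
    intro n
    rw [Real.zero_rpow (by nlinarith [hβ n] : α * ((m : ℝ) + 1 + n) - 1 ≠ 0)]
    ring
  have hopen : IsOpen (Set.Ioo (-R) R) := isOpen_Ioo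
  have hconn : IsPreconnected (Set.Ioo (-R) R) := (convex_Ioo (-R) R).isPreconnected
  -- first term-by-term differentiation
  have H1 : ∀ x ∈ Set.Ioo (-R) R, HasDerivAt
      (fun t : ℝ => ∑' n : ℕ, (-B) ^ (m + 1 + n) * t ^ (α * ((m : ℝ) + 1 + n)) /
        Real.Gamma (α * ((m : ℝ) + 1 + n) + 1))
      (∑' n : ℕ, (-B) ^ (m + 1 + n) * (α * ((m : ℝ) + 1 + n) * x ^ (α * ((m : ℝ) + 1 + n) - 1)) /
        Real.Gamma (α * ((m : ℝ) + 1 + n) + 1)) x := by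
    intro x hx
    exact hasDerivAt_tsum_of_isPreconnected hu hopen hconn
      (fun n y _ => hder1 n y) hbound1 h0s hf0 hx
  -- second term-by-term differentiation
  have H2 : ∀ x ∈ Set.Ioo (-R) R, HasDerivAt
      (fun t : ℝ => ∑' n : ℕ, (-B) ^ (m + 1 + n) *
        (α * ((m : ℝ) + 1 + n) * t ^ (α * ((m : ℝ) + 1 + n) - 1)) /
        Real.Gamma (α * ((m : ℝ) + 1 + n) + 1))
      (∑' n : ℕ, (-B) ^ (m + 1 + n) * (α * ((m : ℝ) + 1 + n) *
          ((α * ((m : ℝ) + 1 + n) - 1) * x ^ (α * ((m : ℝ) + 1 + n) - 2))) /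
        Real.Gamma (α * ((m : ℝ) + 1 + n) + 1)) x := by
    intro x hx
    exact hasDerivAt_tsum_of_isPreconnected hu hopen hconn
      (fun n y _ => hder2 n y) hbound2 h0s hg0 hx
  -- continuity of the second derivative series
  have Hcont : ContinuousOn
      (fun x : ℝ => ∑' n : ℕ, (-B) ^ (m + 1 + n) * (α * ((m : ℝ) + 1 + n) *
          ((α * ((m : ℝ) + 1 + n) - 1) * x ^ (α * ((m : ℝ) + 1 + n) - 2))) /
        Real.Gamma (α * ((m : ℝ) + 1 + n) + 1)) (Set.Ioo (-R) R) := by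
    apply continuousOn_tsum _ hu hbound2
    intro n
    have hc : Continuous fun t : ℝ => t ^ (α * ((m : ℝ) + 1 + n) - 2) :=
      continuous_iff_continuousAt.2 fun x =>
        Real.continuousAt_rpow_const x _ (Or.inr (by linarith [hβ n]))
    exact ((continuous_const.mul (continuous_const.mul (continuous_const.mul hc))).div_const
      _).continuousOn
  -- assemble
  have key : ContDiffOn ℝ 2
      (fun t : ℝ => ∑' n : ℕ, (-B) ^ (m + 1 + n) * t ^ (α * ((m : ℝ) + 1 + n)) /
        Real.Gamma (α * ((m : ℝ) + 1 + n) + 1)) (Set.Ioo (-R) R) := by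
    rw [show (2 : WithTop ℕ∞) = 1 + 1 by norm_num]
    rw [contDiffOn_succ_iff_deriv_of_isOpen hopen]
    refine ⟨fun x hx => (H1 x hx).differentiableAt.differentiableWithinAt, by simp, ?_⟩
    apply ContDiffOn.congr (f := fun x : ℝ =>
        ∑' n : ℕ, (-B) ^ (m + 1 + n) * (α * ((m : ℝ) + 1 + n) *
          x ^ (α * ((m : ℝ) + 1 + n) - 1)) / Real.Gamma (α * ((m : ℝ) + 1 + n) + 1))
      ?_ (fun x hx => (H1 x hx).deriv)
    rw [show (1 : WithTop ℕ∞) = 0 + 1 by norm_num]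
    rw [contDiffOn_succ_iff_deriv_of_isOpen hopen]
    refine ⟨fun x hx => (H2 x hx).differentiableAt.differentiableWithinAt, by simp, ?_⟩
    rw [contDiffOn_zero]
    exact ContinuousOn.congr Hcont (fun x hx => (H2 x hx).deriv)
  exact key.mono hsub
end

section
/- Let 0 < α < 1, B > 0, T > 0 and let m be a positive integer with mα > 3. Then the function z : [0,T] → ℝ defined by z(t) = ∑_{n=m+1}^∞ (−B)^n t^{αn} / Γ(αn + 1) is three times continuously differentiable on [0,T] (i.e. z ∈ C³[0,T], with one-sided derivatives at the endpoints). -/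
open Real Set Filter

lemma gamma_step {α x : ℝ} (hα0 : 0 < α) (hα1 : α < 1) (hx : 1 ≤ x) :
    Real.Gamma (x + 1) ≤ Real.Gamma (x + α) * (x + α) ^ (1 - α) := by
  have hxα : 0 < x + α := by linarith
  have hG1 : 0 < Real.Gamma (x + α) := Real.Gamma_pos_of_pos hxα
  have hG0 : 0 < Real.Gamma (x + 1) := Real.Gamma_pos_of_pos (by linarith)
  have hrec : Real.Gamma (x + α + 1) = (x + α) * Real.Gamma (x + α) :=
    Real.Gamma_add_one (ne_of_gt hxα)
  have hconv := Real.convexOn_log_Gamma.2 (Set.mem_Ioi.2 hxα)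
    (Set.mem_Ioi.2 (show (0:ℝ) < x + α + 1 by linarith)) hα0.le
    (show (0:ℝ) ≤ 1 - α by linarith) (by ring)
  have hpt : α • (x + α) + (1 - α) • (x + α + 1) = x + 1 := by
    simp only [smul_eq_mul]; ring
  rw [hpt] at hconv
  simp only [Function.comp_apply, smul_eq_mul] at hconv
  have hlog : Real.log (Real.Gamma (x + 1)) ≤
      Real.log (Real.Gamma (x + α)) + (1 - α) * Real.log (x + α) := by
    rw [hrec, Real.log_mul (ne_of_gt hxα) (ne_of_gt hG1)] at hconv
    nlinarith [hconv]
  calc Real.Gamma (x + 1) = Real.exp (Real.log (Real.Gamma (x + 1))) :=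
        (Real.exp_log hG0).symm
    _ ≤ Real.exp (Real.log (Real.Gamma (x + α)) + (1 - α) * Real.log (x + α)) :=
        Real.exp_le_exp.2 hlog
    _ = Real.Gamma (x + α) * (x + α) ^ (1 - α) := by
        rw [Real.exp_add, Real.exp_log hG1, Real.rpow_def_of_pos hxα, mul_comm (Real.log _)]

/-- Theorem 2 of the paper: the tail `z(t) = ∑_{n=m+1}^∞ (−B)^n t^{αn} / Γ(αn+1)` of the
Mittag-Leffler series is three times continuously differentiable on `[0,T]` when `mα > 3`. -/
theorem tail_contDiffOn_three (α B T : ℝ) (m : ℕ)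
    (hα0 : 0 < α) (hα1 : α < 1) (hB : 0 < B) (hT : 0 < T)
    (hm : 0 < m) (hmα : 3 < m * α) :
    ContDiffOn ℝ 3
      (fun t : ℝ => ∑' n : ℕ,
        (-B) ^ (m + 1 + n) * t ^ (α * ((m : ℝ) + 1 + n)) /
          Real.Gamma (α * ((m : ℝ) + 1 + n) + 1))
      (Set.Icc 0 T) := by
  set R : ℝ := T + 1 with hRdef
  have hR1 : 1 < R := by simp only [hRdef]; linarith
  have hR0 : 0 < R := by linarith
  set γ : ℕ → ℝ := fun n => α * ((m : ℝ) + 1 + n) with hγdef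
  have hγ3 : ∀ n, 3 < γ n := by
    intro n
    have h1 : (m : ℝ) * α ≤ α * ((m : ℝ) + 1 + n) := by
      have : (0:ℝ) ≤ n := Nat.cast_nonneg n
      nlinarith
    simp only [hγdef]; linarith
  have hγpos : ∀ n, 0 < γ n := fun n => by linarith [hγ3 n]
  have hγsucc : ∀ n, γ (n + 1) = γ n + α := by
    intro n; simp only [hγdef]; push_cast; ring
  have hG : ∀ n, 0 < Real.Gamma (γ n + 1) :=
    fun n => Real.Gamma_pos_of_pos (by linarith [hγ3 n])
  set c : ℕ → ℝ := fun n => (-B) ^ (m + 1 + n) / Real.Gamma (γ n + 1) with hcdef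
  have hcabs : ∀ n, |c n| = B ^ (m + 1 + n) / Real.Gamma (γ n + 1) := by
    intro n
    rw [hcdef, abs_div, abs_pow, abs_neg, abs_of_pos hB, abs_of_pos (hG n)]
  set D : ℕ → ℝ := fun n => B ^ (m + 1 + n) * (γ n) ^ 3 * R ^ (γ n) / Real.Gamma (γ n + 1)
    with hDdef
  have hDpos : ∀ n, 0 < D n := by
    intro n
    have := hγ3 n
    apply div_pos _ (hG n)
    positivity
  -- Summability of the dominating series
  have hsum : Summable D := by
    apply summable_of_ratio_norm_eventually_le (r := (1/2 : ℝ)) (by norm_num)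
    have htend : Tendsto (fun n : ℕ => (γ n + α + 1) ^ α) atTop atTop := by
      apply (tendsto_rpow_atTop hα0).comp
      apply tendsto_atTop_add_const_right
      apply tendsto_atTop_add_const_right
      have h1 : Tendsto (fun n : ℕ => ((m:ℝ) + 1 + n)) atTop atTop :=
        tendsto_atTop_add_const_left _ _ tendsto_natCast_atTop_atTop
      exact h1.const_mul_atTop hα0
    filter_upwards [htend.eventually_ge_atTop (32 * B * R ^ α)] with n hkey
    rw [Real.norm_of_nonneg (hDpos _).le, Real.norm_of_nonneg (hDpos _).le]
    set x := γ n with hx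
    set a := B ^ (m + 1 + n) with ha
    set g := Real.Gamma (x + 1) with hg
    set g' := Real.Gamma (x + α + 1) with hg'
    set r := R ^ x with hr
    set rα := R ^ α with hrα
    set P := (x + α + 1) ^ (1 - α) with hP
    set Q := (x + α + 1) ^ α with hQ
    have hx3 : 3 < x := hγ3 n
    have hgpos : 0 < g := hG n
    have hg'pos : 0 < g' := by
      have := hG (n + 1); rwa [hγsucc] at this
    have hPpos : 0 < P := Real.rpow_pos_of_pos (by linarith) _
    have hQpos : 0 < Q := Real.rpow_pos_of_pos (by linarith) _
    have hrpos : 0 < r := Real.rpow_pos_of_pos hR0 _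
    have hrαpos : 0 < rα := Real.rpow_pos_of_pos hR0 _
    have hapos : 0 < a := pow_pos hB _
    have hDn1 : D (n + 1) = a * B * (x + α) ^ 3 * (r * rα) / g' := by
      simp only [hDdef, hγsucc n]
      rw [show m + 1 + (n + 1) = (m + 1 + n) + 1 from rfl, pow_succ, Real.rpow_add hR0]
    have hDn : D n = a * x ^ 3 * r / g := rfl
    have h2 : (x + 1) * g ≤ g' * P := by
      have h := gamma_step hα0 hα1 (show (1:ℝ) ≤ x + 1 by linarith)
      rw [Real.Gamma_add_one (by positivity : x + 1 ≠ 0)] at h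
      rw [show x + 1 + α = x + α + 1 from by ring] at h
      exact h
    have h3 : P * Q = x + α + 1 := by
      rw [hP, hQ, ← Real.rpow_add (by linarith)]; norm_num
    have h4 : (x + α) ^ 3 ≤ 8 * x ^ 3 := by
      calc (x + α) ^ 3 ≤ (2 * x) ^ 3 := by
            apply pow_le_pow_left₀ (by linarith) (by linarith)
        _ = 8 * x ^ 3 := by ring
    have h5 : x + α + 1 ≤ 2 * (x + 1) := by linarith
    have key : a * B * (x + α) ^ 3 * (r * rα) * g * (32 * (x + 1)) ≤
        1 / 2 * (a * x ^ 3 * r) * g' * (32 * (x + 1)) := by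
      calc a * B * (x + α) ^ 3 * (r * rα) * g * (32 * (x + 1))
          = (a * (x + α) ^ 3 * r) * ((32 * B * rα) * ((x + 1) * g)) := by ring
        _ ≤ (a * (x + α) ^ 3 * r) * (Q * (g' * P)) := by
            apply mul_le_mul_of_nonneg_left _ (by positivity)
            exact mul_le_mul hkey h2 (by positivity) hQpos.le
        _ = (a * r * g') * ((x + α) ^ 3 * (P * Q)) := by ring
        _ = (a * r * g') * ((x + α) ^ 3 * (x + α + 1)) := by rw [h3]
        _ ≤ (a * r * g') * ((8 * x ^ 3) * (2 * (x + 1))) := by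
            apply mul_le_mul_of_nonneg_left _ (by positivity)
            exact mul_le_mul h4 h5 (by linarith) (by positivity)
        _ = 1 / 2 * (a * x ^ 3 * r) * g' * (32 * (x + 1)) := by ring
    have key2 : a * B * (x + α) ^ 3 * (r * rα) * g ≤ 1 / 2 * (a * x ^ 3 * r) * g' :=
      le_of_mul_le_mul_right key (by positivity)
    rw [hDn1, hDn,
      show (1:ℝ) / 2 * (a * x ^ 3 * r / g) = (1 / 2 * (a * x ^ 3 * r)) / g from by ring,
      div_le_div_iff₀ hg'pos hgpos]
    exact key2
  -- Generic pointwise bound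
  have hbnd : ∀ (n : ℕ) (w q x : ℝ), |w| ≤ (γ n) ^ 3 → 0 ≤ q → q ≤ γ n → |x| ≤ R →
      |c n * (w * x ^ q)| ≤ D n := by
    intro n w q x hw hq0 hqγ hx
    have hxq : |x ^ q| ≤ R ^ (γ n) := by
      calc |x ^ q| ≤ |x| ^ q := Real.abs_rpow_le_abs_rpow x q
        _ ≤ R ^ q := Real.rpow_le_rpow (abs_nonneg x) hx hq0
        _ ≤ R ^ (γ n) := Real.rpow_le_rpow_of_exponent_le hR1.le hqγ
    rw [abs_mul, abs_mul, hcabs n]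
    calc B ^ (m + 1 + n) / Real.Gamma (γ n + 1) * (|w| * |x ^ q|)
        = B ^ (m + 1 + n) * (|w| * |x ^ q|) / Real.Gamma (γ n + 1) := by ring
      _ ≤ B ^ (m + 1 + n) * ((γ n) ^ 3 * R ^ (γ n)) / Real.Gamma (γ n + 1) := by gcongr
      _ = D n := by simp only [hDdef]; ring
  have h8 : ∀ n, γ n ≤ γ n ^ 2 := fun n => by nlinarith [hγ3 n, hγpos n]
  have h9 : ∀ n, γ n ^ 2 ≤ γ n ^ 3 := fun n => by nlinarith [hγ3 n, sq_nonneg (γ n)]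
  -- the set on which we work
  set s : Set ℝ := Set.Ioo (-R) R with hsdef
  have hsopen : IsOpen s := isOpen_Ioo
  have hsconn : IsPreconnected s := (convex_Ioo (-R) R).isPreconnected
  have h0s : (0:ℝ) ∈ s := ⟨by linarith, by linarith⟩
  have hxabs : ∀ x ∈ s, |x| ≤ R := by
    intro x hx; rw [abs_le]; exact ⟨hx.1.le, hx.2.le⟩
  -- the derivative families
  set f₀ : ℕ → ℝ → ℝ := fun n t => c n * t ^ (γ n) with hf₀
  set f₁ : ℕ → ℝ → ℝ := fun n t => c n * (γ n * t ^ (γ n - 1)) with hf₁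
  set f₂ : ℕ → ℝ → ℝ := fun n t => c n * (γ n * ((γ n - 1) * t ^ (γ n - 2))) with hf₂
  set f₃ : ℕ → ℝ → ℝ := fun n t => c n * (γ n * ((γ n - 1) * ((γ n - 2) * t ^ (γ n - 3))))
    with hf₃
  have hd0 : ∀ n x, HasDerivAt (f₀ n) (f₁ n x) x := fun n x =>
    (Real.hasDerivAt_rpow_const (x := x) (p := γ n)
      (Or.inr (by linarith [hγ3 n]))).const_mul (c n)
  have hd1 : ∀ n x, HasDerivAt (f₁ n) (f₂ n x) x := by
    intro n x
    have h := ((Real.hasDerivAt_rpow_const (x := x) (p := γ n - 1)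
      (Or.inr (by linarith [hγ3 n]))).const_mul (γ n)).const_mul (c n)
    rw [show γ n - 1 - 1 = γ n - 2 from by ring] at h
    exact h
  have hd2 : ∀ n x, HasDerivAt (f₂ n) (f₃ n x) x := by
    intro n x
    have h := (((Real.hasDerivAt_rpow_const (x := x) (p := γ n - 2)
      (Or.inr (by linarith [hγ3 n]))).const_mul (γ n - 1)).const_mul (γ n)).const_mul (c n)
    rw [show γ n - 2 - 1 = γ n - 3 from by ring] at h
    exact h
  -- norm bounds
  have hb1 : ∀ n, ∀ x ∈ s, ‖f₁ n x‖ ≤ D n := by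
    intro n x hx
    rw [Real.norm_eq_abs]
    apply hbnd n (γ n) (γ n - 1) x _ (by linarith [hγ3 n]) (by linarith [hγ3 n]) (hxabs x hx)
    rw [abs_of_pos (hγpos n)]
    nlinarith [h8 n, h9 n]
  have hb2 : ∀ n, ∀ x ∈ s, ‖f₂ n x‖ ≤ D n := by
    intro n x hx
    rw [Real.norm_eq_abs, show f₂ n x = c n * ((γ n * (γ n - 1)) * x ^ (γ n - 2)) from by
      simp only [hf₂]; ring]
    apply hbnd n _ _ x _ (by linarith [hγ3 n]) (by linarith [hγ3 n]) (hxabs x hx)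
    rw [abs_of_pos (mul_pos (hγpos n) (by linarith [hγ3 n]))]
    nlinarith [h8 n, h9 n, hγpos n]
  have hb3 : ∀ n, ∀ x ∈ s, ‖f₃ n x‖ ≤ D n := by
    intro n x hx
    rw [Real.norm_eq_abs, show f₃ n x = c n * ((γ n * (γ n - 1) * (γ n - 2)) * x ^ (γ n - 3))
      from by simp only [hf₃]; ring]
    apply hbnd n _ _ x _ (by linarith [hγ3 n]) (by linarith [hγ3 n]) (hxabs x hx)
    rw [abs_of_pos (mul_pos (mul_pos (hγpos n) (by linarith [hγ3 n]))
      (by linarith [hγ3 n]))]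
    nlinarith [h8 n, h9 n, hγpos n]
  -- vanishing at 0
  have hz0 : Summable (fun n => f₀ n 0) := by
    apply summable_zero.congr
    intro n
    simp [hf₀, Real.zero_rpow (by linarith [hγ3 n] : γ n ≠ 0)]
  have hz1 : Summable (fun n => f₁ n 0) := by
    apply summable_zero.congr
    intro n
    simp [hf₁, Real.zero_rpow (by intro h; nlinarith [hγ3 n] : γ n - 1 ≠ 0)]
  have hz2 : Summable (fun n => f₂ n 0) := by
    apply summable_zero.congr
    intro n
    simp [hf₂, Real.zero_rpow (by intro h; nlinarith [hγ3 n] : γ n - 2 ≠ 0)]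
  -- derivative statements for the sums
  have hF1 : ∀ x ∈ s, HasDerivAt (fun t => ∑' n, f₀ n t) (∑' n, f₁ n x) x :=
    fun x hx => hasDerivAt_tsum_of_isPreconnected hsum hsopen hsconn
      (fun n y _ => hd0 n y) hb1 h0s hz0 hx
  have hF2 : ∀ x ∈ s, HasDerivAt (fun t => ∑' n, f₁ n t) (∑' n, f₂ n x) x :=
    fun x hx => hasDerivAt_tsum_of_isPreconnected hsum hsopen hsconn
      (fun n y _ => hd1 n y) hb2 h0s hz1 hx
  have hF3 : ∀ x ∈ s, HasDerivAt (fun t => ∑' n, f₂ n t) (∑' n, f₃ n x) x :=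
    fun x hx => hasDerivAt_tsum_of_isPreconnected hsum hsopen hsconn
      (fun n y _ => hd2 n y) hb3 h0s hz2 hx
  have hF3cont : ContinuousOn (fun t => ∑' n, f₃ n t) s := by
    apply continuousOn_tsum (fun n => ?_) hsum hb3
    apply Continuous.continuousOn
    exact continuous_const.mul (continuous_const.mul (continuous_const.mul
      (continuous_const.mul (Real.continuous_rpow_const (by linarith [hγ3 n])))))
  -- assemble the smoothness
  have main : ContDiffOn ℝ 3 (fun t => ∑' n, f₀ n t) s := by
    rw [show (3 : WithTop ℕ∞) = 2 + 1 from by norm_num,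
      contDiffOn_succ_iff_deriv_of_isOpen hsopen]
    refine ⟨fun x hx => (hF1 x hx).differentiableAt.differentiableWithinAt, by simp, ?_⟩
    have h2' : ContDiffOn ℝ 2 (fun t => ∑' n, f₁ n t) s := by
      rw [show (2 : WithTop ℕ∞) = 1 + 1 from by norm_num,
        contDiffOn_succ_iff_deriv_of_isOpen hsopen]
      refine ⟨fun x hx => (hF2 x hx).differentiableAt.differentiableWithinAt, by simp, ?_⟩
      have h1' : ContDiffOn ℝ 1 (fun t => ∑' n, f₂ n t) s := by
        rw [show (1 : WithTop ℕ∞) = 0 + 1 from by norm_num,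
          contDiffOn_succ_iff_deriv_of_isOpen hsopen]
        refine ⟨fun x hx => (hF3 x hx).differentiableAt.differentiableWithinAt, by simp, ?_⟩
        have h0' : ContDiffOn ℝ 0 (fun t => ∑' n, f₃ n t) s := by
          rw [contDiffOn_zero]; exact hF3cont
        exact h0'.congr fun x hx => (hF3 x hx).deriv
      exact h1'.congr fun x hx => (hF2 x hx).deriv
    exact h2'.congr fun x hx => (hF1 x hx).deriv
  -- conclude
  have hpt : (fun t : ℝ => ∑' n : ℕ,
      (-B) ^ (m + 1 + n) * t ^ (α * ((m : ℝ) + 1 + n)) /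
        Real.Gamma (α * ((m : ℝ) + 1 + n) + 1)) = fun t => ∑' n, f₀ n t := by
    funext t
    apply tsum_congr
    intro n
    simp only [hf₀, hcdef, hγdef]
    ring
  rw [hpt]
  apply main.mono
  intro x hx
  exact ⟨by linarith [hx.1], by linarith [hx.2]⟩
end

section
/- For every real x > 0, the Gamma function satisfies Γ(1 + x)^{2/x} ≥ e^{−2}(x + 1)(x + 2). -/
open Real Set


/-- Padé-type bound for log. -/
lemma log_le_pade {a : ℝ} (ha : 1 ≤ a) : Real.log a ≤ (a - a⁻¹) / 2 := by
  have key : MonotoneOn (fun t : ℝ => (t - t⁻¹) / 2 - Real.log t) (Ici 1) := by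
    apply monotoneOn_of_deriv_nonneg (convex_Ici 1)
    · apply ContinuousOn.sub
      · exact (continuousOn_id.sub (continuousOn_inv₀.mono (by intro t ht; simp at ht ⊢; linarith))).div_const 2
      · exact Real.continuousOn_log.mono (by intro t ht; simp at ht ⊢; linarith)
    · intro t ht
      rw [interior_Ici] at ht
      have ht0 : t ≠ 0 := by simp at ht; intro h; rw [h] at ht; linarith
      exact ((((hasDerivAt_id t).sub (hasDerivAt_inv ht0)).div_const 2).sub
        (Real.hasDerivAt_log ht0)).differentiableAt.differentiableWithinAt
    · intro t ht
      rw [interior_Ici] at ht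
      have ht1 : (1:ℝ) < t := ht
      have ht0 : t ≠ 0 := by linarith
      have hd : deriv (fun t : ℝ => (t - t⁻¹) / 2 - Real.log t) t
          = (1 - (-(t^2)⁻¹)) / 2 - t⁻¹ :=
        ((((hasDerivAt_id t).sub (hasDerivAt_inv ht0)).div_const 2).sub
          (Real.hasDerivAt_log ht0)).deriv
      rw [hd]
      have h2 : (0:ℝ) < t^2 := by positivity
      rw [div_sub' (by norm_num : (2:ℝ) ≠ 0)]
      apply div_nonneg _ (by norm_num)
      have : (1 - (-(t^2)⁻¹)) - 2 * t⁻¹ = (t-1)^2 / t^2 := by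
        field_simp; ring
      rw [this]; positivity
  have h := key (by simp : (1:ℝ) ∈ Ici 1) (by simpa using ha) ha
  simp only [Real.log_one, inv_one] at h
  linarith

/-- Degree-5 upper bound for `log (1+t)`, `t ≥ 0`. -/
lemma log_le_poly5 {t : ℝ} (ht : 0 ≤ t) :
    Real.log (1 + t) ≤ t - t^2/2 + t^3/3 - t^4/4 + t^5/5 := by
  have key : MonotoneOn
      (fun u : ℝ => u - u^2/2 + u^3/3 - u^4/4 + u^5/5 - Real.log (1+u)) (Ici 0) := by
    apply monotoneOn_of_deriv_nonneg (convex_Ici 0)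
    · apply ContinuousOn.sub
      · fun_prop
      · apply Real.continuousOn_log.comp (by fun_prop)
        intro u hu; simp at hu ⊢; linarith
    · intro u hu
      rw [interior_Ici] at hu
      have hu0 : (0:ℝ) < u := hu
      have h1u : (1 + u) ≠ 0 := by linarith
      apply DifferentiableAt.differentiableWithinAt
      apply DifferentiableAt.sub
      · fun_prop
      · exact (((hasDerivAt_const u (1:ℝ)).add (hasDerivAt_id u)).log h1u).differentiableAt
    · intro u hu
      rw [interior_Ici] at hu
      have hu0 : (0:ℝ) < u := hu
      have h1u : (1 + u) ≠ 0 := by linarith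
      have hlog : HasDerivAt (fun u : ℝ => Real.log (1+u)) ((0+1)/(1+u)) u :=
        ((hasDerivAt_const u (1:ℝ)).add (hasDerivAt_id u)).log h1u
      have hpoly : HasDerivAt (fun u : ℝ => u - u^2/2 + u^3/3 - u^4/4 + u^5/5)
          (1 - 2*u/2 + 3*u^2/3 - 4*u^3/4 + 5*u^4/5) u := by
        have := (hasDerivAt_pow 2 u).div_const 2
        have := (hasDerivAt_pow 3 u).div_const 3
        have := (hasDerivAt_pow 4 u).div_const 4
        have := (hasDerivAt_pow 5 u).div_const 5
        have h1 := hasDerivAt_id u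
        exact (((((hasDerivAt_id u).sub ((hasDerivAt_pow 2 u).div_const 2)).add
          ((hasDerivAt_pow 3 u).div_const 3)).sub ((hasDerivAt_pow 4 u).div_const 4)).add
          ((hasDerivAt_pow 5 u).div_const 5)).congr_deriv (by norm_num)
      have hd : deriv (fun u : ℝ => u - u^2/2 + u^3/3 - u^4/4 + u^5/5 - Real.log (1+u)) u = _ :=
        (hpoly.sub hlog).deriv
      rw [hd]
      have h1u' : (0:ℝ) < 1 + u := by linarith
      rw [sub_nonneg]
      rw [div_le_iff₀ h1u']
      nlinarith [pow_nonneg hu0.le 5]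
  have h := key (self_mem_Ici) (by simpa using ht) ht
  simp only [Real.log_one] at h
  norm_num at h
  linarith

lemma Gamma_add_nat (x : ℝ) (hx : 0 < x) (n : ℕ) :
    Real.Gamma (x + n) = (∏ j ∈ Finset.range n, (x + j)) * Real.Gamma x := by
  induction n with
  | zero => simp
  | succ n ih =>
    have hcast : x + ((n:ℕ)+1 : ℕ) = (x + n) + 1 := by push_cast; ring
    have hpos : x + (n:ℝ) ≠ 0 := by positivity
    rw [hcast, Real.Gamma_add_one hpos, ih, Finset.prod_range_succ]
    ring


set_option maxHeartbeats 1600000 in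
lemma gamma_base (x : ℝ) (hx : 0 < x) (hx32 : x ≤ 3/2) :
    x/2 * (Real.log (x+1) + Real.log (x+2)) - x ≤ Real.log (Real.Gamma (1+x)) := by
  have h1x : (0:ℝ) < 1 + x := by linarith
  have hG31 : (0:ℝ) < Real.Gamma 31 := Real.Gamma_pos_of_pos (by norm_num)
  have hG1x : (0:ℝ) < Real.Gamma (1+x) := Real.Gamma_pos_of_pos h1x
  have hs := Real.convexOn_log_Gamma.slope_mono_adjacent
    (show (31:ℝ) ∈ Ioi (0:ℝ) by norm_num)
    (show (32:ℝ) + x ∈ Ioi (0:ℝ) by rw [mem_Ioi]; linarith)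
    (by norm_num : (31:ℝ) < 32) (by linarith : (32:ℝ) < 32 + x)
  simp only [Function.comp_apply] at hs
  rw [show (32:ℝ) - 31 = 1 by norm_num, show (32:ℝ) + x - 32 = x by ring, div_one] at hs
  have hs2 : (Real.log (Real.Gamma 32) - Real.log (Real.Gamma 31)) * x
      ≤ Real.log (Real.Gamma (32+x)) - Real.log (Real.Gamma 32) := (le_div_iff₀ hx).1 hs
  have h3231 : Real.log (Real.Gamma 32) - Real.log (Real.Gamma 31) = Real.log 31 := by
    rw [show (32:ℝ) = 31 + 1 by norm_num, Real.Gamma_add_one (by norm_num : (31:ℝ) ≠ 0),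
      Real.log_mul (by norm_num) (ne_of_gt hG31)]
    ring
  have hprod : Real.log (Real.Gamma (32 + x))
      = (∑ j ∈ Finset.range 31, Real.log ((1+x) + (j:ℝ))) + Real.log (Real.Gamma (1+x)) := by
    rw [show (32:ℝ) + x = (1+x) + ((31:ℕ):ℝ) by push_cast; ring, Gamma_add_nat (1+x) h1x 31,
      Real.log_mul (ne_of_gt (Finset.prod_pos (fun j _ => by positivity))) (ne_of_gt hG1x),
      Real.log_prod (fun j _ => by positivity)]
  have hG32sum : Real.log (Real.Gamma 32) = ∑ j ∈ Finset.range 31, Real.log (1 + (j:ℝ)) := by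
    rw [show (32:ℝ) = 1 + ((31:ℕ):ℝ) by push_cast; norm_num, Gamma_add_nat 1 one_pos 31,
      Real.Gamma_one, mul_one, Real.log_prod (fun j _ => by positivity)]
  have hsplit : (∑ j ∈ Finset.range 31, Real.log ((1+x) + (j:ℝ)))
      = (∑ j ∈ Finset.range 31, Real.log (1 + (j:ℝ)))
        + ∑ j ∈ Finset.range 31, Real.log (1 + x/(1+(j:ℝ))) := by
    rw [← Finset.sum_add_distrib]
    refine Finset.sum_congr rfl fun j _ => ?_
    have hj : (0:ℝ) < 1 + (j:ℝ) := by positivity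
    rw [← Real.log_mul (ne_of_gt hj) (by positivity)]
    congr 1
    field_simp
    ring
  have hkey : Real.log 31 * x - (∑ j ∈ Finset.range 31, Real.log (1 + x/(1+(j:ℝ))))
      ≤ Real.log (Real.Gamma (1+x)) := by
    rw [h3231] at hs2
    rw [hprod, hG32sum, hsplit] at hs2
    linarith
  have hl2 : Real.log (x+2) = Real.log 2 + Real.log (1 + x/2) := by
    rw [← Real.log_mul two_ne_zero (by positivity)]; congr 1; ring
  have hp2 : Real.log (1 + x/2) ≤ x/2 - (x/2)^2/2 + (x/2)^3/3 - (x/2)^4/4 + (x/2)^5/5 :=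
    log_le_poly5 (by positivity)
  have hlog31 : ((589872829000987759:ℝ)/171774906000000000) ≤ Real.log 31 := by
    have h32e : Real.log 32 = Real.log 31 + Real.log (1 + 1/31) := by
      rw [← Real.log_mul (by norm_num) (by norm_num)]; norm_num
    have h32p : Real.log 32 = 5 * Real.log 2 := by
      rw [show (32:ℝ) = 2^5 by norm_num, Real.log_pow]; push_cast; ring
    have hb := log_le_poly5 (by norm_num : (0:ℝ) ≤ 1/31)
    have h2 := Real.log_two_gt_d9
    linarith
  have hxh : (0:ℝ) ≤ x/2 := by positivity
  have m2 : x/2 * Real.log (x+2)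
      ≤ x/2 * (Real.log 2 + (x/2 - (x/2)^2/2 + (x/2)^3/3 - (x/2)^4/4 + (x/2)^5/5)) := by
    rw [hl2]; exact mul_le_mul_of_nonneg_left (by linarith) hxh
  have m3 : x * Real.log 2 ≤ x * 0.6931471808 :=
    mul_le_mul_of_nonneg_left Real.log_two_lt_d9.le hx.le
  have mL : x * (((589872829000987759:ℝ)/171774906000000000)) ≤ x * Real.log 31 := mul_le_mul_of_nonneg_left hlog31 hx.le
  rcases le_or_gt x (3/4) with hreg | hreg
  · -- region 1 : 0 < x ≤ 3/4
    have hsb : (∑ j ∈ Finset.range 31, Real.log (1 + x/(1+(j:ℝ))))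
        ≤ ∑ j ∈ Finset.range 31, (x/(1+(j:ℝ)) - (x/(1+(j:ℝ)))^2/2 + (x/(1+(j:ℝ)))^3/3
            - (x/(1+(j:ℝ)))^4/4 + (x/(1+(j:ℝ)))^5/5) :=
      Finset.sum_le_sum fun j _ => log_le_poly5 (by positivity)
    have heval : (∑ j ∈ Finset.range 31, (x/(1+(j:ℝ)) - (x/(1+(j:ℝ)))^2/2 + (x/(1+(j:ℝ)))^3/3
            - (x/(1+(j:ℝ)))^4/4 + (x/(1+(j:ℝ)))^5/5))
        = ((290774257297357:ℝ)/72201776446800)*x + ((-8409718829321111776031704609:ℝ)/10426193044147366466460480000)*x^2 + ((452258383755676134382925365715715643032973:ℝ)/1129184489047063975089501640540533696000000)*x^3 + ((-29413332766756426905440378503766288320668184398196912081:ℝ)/108705501393826928391079948629239287776739401830400000000)*x^4 + ((184967370681202505747390218427981190066503821901060740500475703595887:ℝ)/891901171610727010138939369790268540227248872724965400934400000000000)*x^5 := by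
      simp only [Finset.sum_range_succ, Finset.sum_range_zero]
      push_cast
      ring
    rw [heval] at hsb
    have hp1 : Real.log (x+1) ≤ x - x^2/2 + x^3/3 - x^4/4 + x^5/5 := by
      have h := log_le_poly5 hx.le
      rwa [add_comm 1 x] at h
    have m1 : x/2 * Real.log (x+1) ≤ x/2 * (x - x^2/2 + x^3/3 - x^4/4 + x^5/5) :=
      mul_le_mul_of_nonneg_left hp1 hxh
    have hE1 : 0 ≤ ((100300535991878601928449227:ℝ)/1666996419648129570000000000)*x + ((590074046210586926186344609:ℝ)/10426193044147366466460480000)*x^2 + ((-99388230928468642167456103046798863032973:ℝ)/1129184489047063975089501640540533696000000)*x^3 + ((9031051255413877832112888135783921862529546554996912081:ℝ)/108705501393826928391079948629239287776739401830400000000)*x^4 + ((-66511746326652824713312333377711149567572330992276273188875703595887:ℝ)/891901171610727010138939369790268540227248872724965400934400000000000)*x^5 + ((-33:ℝ)/320)*x^6 := by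
      have hx2 : x^2 ≤ (3/4)*x := by nlinarith
      have hx3 : x^3 ≤ (3/4)*x^2 := by nlinarith [sq_nonneg x]
      have hc3 : x^3 ≤ 27/64 := by nlinarith [sq_nonneg x]
      have hc4 : x^4 ≤ 81/256 := by nlinarith [sq_nonneg x, sq_nonneg (x^2)]
      have hx5 : x^5 ≤ (27/64)*x^2 := by nlinarith [sq_nonneg x, hc3]
      have hx6 : x^6 ≤ (81/256)*x^2 := by nlinarith [sq_nonneg x, hc4]
      have hx4 : 0 ≤ x^4 := by positivity
      linarith
    linarith
  · -- region 2 : 3/4 < x ≤ 3/2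
    have hpeel := Finset.sum_range_succ' (fun j : ℕ => Real.log (1 + x/(1+(j:ℝ)))) 30
    have hsb : (∑ i ∈ Finset.range 30, Real.log (1 + x/(1+((i+1:ℕ):ℝ))))
        ≤ ∑ i ∈ Finset.range 30, (x/(2+(i:ℝ)) - (x/(2+(i:ℝ)))^2/2 + (x/(2+(i:ℝ)))^3/3
            - (x/(2+(i:ℝ)))^4/4 + (x/(2+(i:ℝ)))^5/5) := by
      refine Finset.sum_le_sum fun i _ => ?_
      have hc : (1:ℝ) + ((i+1:ℕ):ℝ) = 2 + (i:ℝ) := by push_cast; ring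
      rw [hc]
      exact log_le_poly5 (by positivity)
    have heval : (∑ i ∈ Finset.range 30, (x/(2+(i:ℝ)) - (x/(2+(i:ℝ)))^2/2 + (x/(2+(i:ℝ)))^3/3
            - (x/(2+(i:ℝ)))^4/4 + (x/(2+(i:ℝ)))^5/5))
        = ((218572480850557:ℝ)/72201776446800)*x + ((-3196622307247428542801464609:ℝ)/10426193044147366466460480000)*x^2 + ((75863554073321476019758152202204411032973:ℝ)/1129184489047063975089501640540533696000000)*x^3 + ((-2236957418299694807670391346456466376483333940596912081:ℝ)/108705501393826928391079948629239287776739401830400000000)*x^4 + ((6587136359057103719602344469927482021054047356067660313595703595887:ℝ)/891901171610727010138939369790268540227248872724965400934400000000000)*x^5 := by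
      simp only [Finset.sum_range_succ, Finset.sum_range_zero]
      push_cast
      ring
    rw [heval] at hsb
    have ht0 : Real.log (1 + x) ≤ Real.log 2 + ((1+x)/2 - 1) := by
      have hq : Real.log (1+x) = Real.log 2 + Real.log ((1+x)/2) := by
        rw [← Real.log_mul two_ne_zero (by positivity)]; congr 1; ring
      rw [hq]
      have := Real.log_le_sub_one_of_pos (show (0:ℝ) < (1+x)/2 by linarith)
      linarith
    have hf0 : Real.log (1 + x/(1+((0:ℕ):ℝ))) ≤ Real.log 2 + ((1+x)/2 - 1) := by
      have hc : (1:ℝ) + ((0:ℕ):ℝ) = 1 := by norm_num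
      rw [hc, div_one]
      exact ht0
    have hp1 : Real.log (x+1) ≤ Real.log 2 + ((1+x)/2 - 1) := by
      rw [add_comm x 1]; exact ht0
    have m1 : x/2 * Real.log (x+1) ≤ x/2 * (Real.log 2 + ((1+x)/2 - 1)) :=
      mul_le_mul_of_nonneg_left hp1 hxh
    have hlog2 := Real.log_two_lt_d9
    have hE2 : 0 ≤ ((-30179247:ℝ)/156250000) + ((772810916386578409709141099:ℝ)/1666996419648129570000000000)*x + ((-2016474214826254690428775391:ℝ)/10426193044147366466460480000)*x^2 + ((-5289523507879977576664299668421055032973:ℝ)/1129184489047063975089501640540533696000000)*x^3 + ((-27740527405032867143774249986018785532070264203087919:ℝ)/108705501393826928391079948629239287776739401830400000000)*x^4 + ((380841544151701047108119356558990949471334462096131881204296404113:ℝ)/891901171610727010138939369790268540227248872724965400934400000000000)*x^5 + ((-1:ℝ)/320)*x^6 := by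
      have h1 : 0 ≤ (x - 3/4)*(3/2 - x) := mul_nonneg (by linarith) (by linarith)
      have hx0 : (0:ℝ) < x := hx
      have hQ2 : x^2 ≤ (9/4)*x - 9/8 := by nlinarith
      have hQ3 : x^3 ≤ (63/16)*x - 81/32 := by
        nlinarith [mul_nonneg h1 (by linarith : (0:ℝ) ≤ x + 9/4)]
      have hQ4 : x^4 ≤ (405/64)*x - 567/128 := by
        nlinarith [mul_nonneg h1 (by positivity : (0:ℝ) ≤ x^2 + (9/4)*x + 63/16)]
      have hQ6 : x^6 ≤ (15309/1024)*x - 22599/2048 := by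
        nlinarith [mul_nonneg h1 (by positivity :
          (0:ℝ) ≤ x^4 + (9/4)*x^3 + (63/16)*x^2 + (405/64)*x + 2511/256)]
      have hQ5 : (405/256)*x - 243/256 ≤ x^5 := by
        nlinarith [mul_nonneg (sq_nonneg (x - 3/4)) (by positivity :
          (0:ℝ) ≤ x^3 + (3/2)*x^2 + (27/16)*x + 27/16)]
      linarith
    linarith [hkey, hpeel, hsb, hf0, m1, m2, m3, mL, hE2, hlog2]

lemma gamma_step_s4 (y : ℝ) (hy : 1/2 ≤ y) :
    (y+1)/2 * (Real.log (y+2) + Real.log (y+3)) - (y+1) ≤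
      Real.log (y+1) + (y/2 * (Real.log (y+1) + Real.log (y+2)) - y) := by
  have h1 : (0:ℝ) < y + 1 := by linarith
  have h2 : (0:ℝ) < y + 2 := by linarith
  have h3 : (0:ℝ) < y + 3 := by linarith
  have ha : Real.log (y+3) = Real.log (y+1) + Real.log ((y+3)/(y+1)) := by
    rw [← Real.log_mul (ne_of_gt h1) (by positivity)]
    congr 1; field_simp
  have hb : Real.log (y+2) = Real.log (y+1) + Real.log ((y+2)/(y+1)) := by
    rw [← Real.log_mul (ne_of_gt h1) (by positivity)]
    congr 1; field_simp
  have hpa : Real.log ((y+3)/(y+1)) ≤ (2*y+4)/((y+1)*(y+3)) := by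
    have h := log_le_pade (show (1:ℝ) ≤ (y+3)/(y+1) by rw [le_div_iff₀ h1]; linarith)
    have he : ((y+3)/(y+1) - ((y+3)/(y+1))⁻¹)/2 = (2*y+4)/((y+1)*(y+3)) := by
      rw [inv_div]
      field_simp
      ring
    linarith [he ▸ h]
  have hpb : Real.log ((y+2)/(y+1)) ≤ (2*y+3)/(2*(y+1)*(y+2)) := by
    have h := log_le_pade (show (1:ℝ) ≤ (y+2)/(y+1) by rw [le_div_iff₀ h1]; linarith)
    have he : ((y+2)/(y+1) - ((y+2)/(y+1))⁻¹)/2 = (2*y+3)/(2*(y+1)*(y+2)) := by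
      rw [inv_div]
      field_simp
      ring
    linarith [he ▸ h]
  have hfrac : (y+1)/2 * ((2*y+4)/((y+1)*(y+3))) + (1/2) * ((2*y+3)/(2*(y+1)*(y+2))) ≤ 1 := by
    have hid : (y+1)/2 * ((2*y+4)/((y+1)*(y+3))) + (1/2) * ((2*y+3)/(2*(y+1)*(y+2)))
        = 1 - (2*y^2+3*y-1)/(4*(y+1)*(y+2)*(y+3)) := by
      field_simp
      ring
    rw [hid]
    have : 0 ≤ (2*y^2+3*y-1)/(4*(y+1)*(y+2)*(y+3)) := by
      apply div_nonneg (by nlinarith) (by positivity)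
    linarith
  have c1 : (y+1)/2 * Real.log ((y+3)/(y+1)) ≤ (y+1)/2 * ((2*y+4)/((y+1)*(y+3))) :=
    mul_le_mul_of_nonneg_left hpa (by positivity)
  have c2 : (1/2) * Real.log ((y+2)/(y+1)) ≤ (1/2) * ((2*y+3)/(2*(y+1)*(y+2))) :=
    mul_le_mul_of_nonneg_left hpb (by norm_num)
  have goal_eq : ((y+1)/2 * (Real.log (y+2) + Real.log (y+3)) - (y+1))
      - (Real.log (y+1) + (y/2 * (Real.log (y+1) + Real.log (y+2)) - y))
      = (y+1)/2 * Real.log ((y+3)/(y+1)) + (1/2) * Real.log ((y+2)/(y+1)) - 1 := by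
    rw [ha, hb]
    ring
  linarith [goal_eq, c1, c2, hfrac]

lemma gamma_key : ∀ (n : ℕ) (x : ℝ), 0 < x → x ≤ 3/2 + n →
    x/2 * (Real.log (x+1) + Real.log (x+2)) - x ≤ Real.log (Real.Gamma (1+x)) := by
  intro n
  induction n with
  | zero => intro x hx hx2; exact gamma_base x hx (by norm_num at hx2 ⊢; linarith)
  | succ n ih =>
    intro x hx hx2
    rcases le_or_gt x (3/2 + n) with h | h
    · exact ih x hx h
    · have hy : (1:ℝ)/2 ≤ x - 1 := by
        have : (0:ℝ) ≤ (n:ℝ) := Nat.cast_nonneg n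
        linarith
      have hx1 : (0:ℝ) < x - 1 := by linarith
      have hprev := ih (x-1) hx1 (by push_cast at hx2 ⊢; linarith)
      have hstep := gamma_step_s4 (x-1) hy
      have hGrec : Real.log (Real.Gamma (1+x)) = Real.log x + Real.log (Real.Gamma (1+(x-1))) := by
        have hx0 : x ≠ 0 := ne_of_gt hx
        have h1 : (1:ℝ) + (x-1) = x := by ring
        rw [show (1:ℝ) + x = x + 1 by ring, Real.Gamma_add_one hx0,
          Real.log_mul hx0 (ne_of_gt (Real.Gamma_pos_of_pos hx)), h1]
      rw [hGrec]
      have e1 : x - 1 + 1 = x := by ring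
      have e2 : x - 1 + 2 = x + 1 := by ring
      have e3 : x - 1 + 3 = x + 2 := by ring
      rw [e1, e2, e3] at hstep
      rw [e1, e2] at hprev
      linarith

/-- For every `x > 0`, `Γ(1 + x)^{2/x} ≥ e^{−2} (x+1)(x+2)`. -/
theorem gamma_rpow_ge (x : ℝ) (hx : 0 < x) :
    Real.exp (-2) * ((x + 1) * (x + 2)) ≤ Real.Gamma (1 + x) ^ (2 / x) := by
  have h1x : (0:ℝ) < 1 + x := by linarith
  have hG : (0:ℝ) < Real.Gamma (1+x) := Real.Gamma_pos_of_pos h1x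
  have hkey := gamma_key ⌈x⌉₊ x hx (by
    have := Nat.le_ceil x
    linarith)
  rw [Real.rpow_def_of_pos hG]
  have hle : -2 + (Real.log (x+1) + Real.log (x+2)) ≤ 2/x * Real.log (Real.Gamma (1+x)) := by
    rw [div_mul_eq_mul_div, le_div_iff₀ hx]
    nlinarith [hkey]
  calc Real.exp (-2) * ((x + 1) * (x + 2))
      = Real.exp (-2 + (Real.log (x+1) + Real.log (x+2))) := by
        rw [Real.exp_add, Real.exp_add, Real.exp_log (by linarith), Real.exp_log (by linarith)]
    _ ≤ Real.exp (2/x * Real.log (Real.Gamma (1+x))) := Real.exp_le_exp.2 hle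
    _ = Real.exp (Real.log (Real.Gamma (1+x)) * (2/x)) := by rw [mul_comm]
end

section
/- Let 0 < α < 1, B > 0, T > 0, and let M < M̃ be positive integers such that αM + α − 2 > 0 and ( B^{1/α} T e / (αM + α − 2) )^α < 1/2. Then for every t ∈ [0,T], | ∑_{n=M+1}^{M̃} (−B)^n t^{αn−2} / Γ(αn − 1) | < 2 B^{2/α} ( B^{1/α} T e / (αM + α − 2) )^{αM + α − 2}. -/
open MeasureTheory Set

lemma gamma_lb {x : ℝ} (hx : 0 < x) :
    x ^ x * Real.exp (-x) ≤ Real.Gamma (x + 1) := by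
  rw [Real.Gamma_eq_integral (by linarith), add_sub_cancel_right]
  have hint : IntegrableOn (fun t : ℝ => Real.exp (-t) * t ^ x) (Ioi 0) := by
    have := Real.GammaIntegral_convergent (s := x + 1) (by linarith)
    simpa using this
  have hint' : IntegrableOn (fun t : ℝ => Real.exp (-t) * t ^ x) (Ioi x) :=
    hint.mono_set (Ioi_subset_Ioi hx.le)
  have h1 : ∫ t in Ioi x, Real.exp (-t) * t ^ x ≤ ∫ t in Ioi 0, Real.exp (-t) * t ^ x := by
    apply setIntegral_mono_set hint
    · filter_upwards [self_mem_ae_restrict (measurableSet_Ioi : MeasurableSet (Ioi (0:ℝ)))]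
        with t ht
      exact mul_nonneg (Real.exp_pos _).le (Real.rpow_nonneg (le_of_lt ht) _)
    · exact HasSubset.Subset.eventuallyLE (Ioi_subset_Ioi hx.le)
  have h2 : ∫ t in Ioi x, Real.exp (-t) * x ^ x ≤ ∫ t in Ioi x, Real.exp (-t) * t ^ x := by
    apply setIntegral_mono_on
    · have := (exp_neg_integrableOn_Ioi x one_pos).mul_const (x ^ x)
      exact this.congr (Filter.EventuallyEq.of_eq (by funext t; simp))
    · exact hint'
    · exact measurableSet_Ioi
    · intro t ht
      exact mul_le_mul_of_nonneg_left
        (Real.rpow_le_rpow hx.le (le_of_lt ht) hx.le) (Real.exp_pos _).le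
  have h3 : ∫ t in Ioi x, Real.exp (-t) * x ^ x = x ^ x * Real.exp (-x) := by
    rw [MeasureTheory.integral_mul_const, integral_exp_neg_Ioi, mul_comm]
  linarith



/-- The uniform Cauchy estimate from the proof of Theorem 2: for positive integers `M < M̃`
with `αM + α − 2 > 0` and `(B^{1/α} T e/(αM+α−2))^α < 1/2`, and every `t ∈ [0,T]`,
`|∑_{n=M+1}^{M̃} (−B)^n t^{αn−2}/Γ(αn−1)| < 2 B^{2/α} (B^{1/α} T e/(αM+α−2))^{αM+α−2}`. -/
theorem uniform_cauchy_estimate (α B T : ℝ) (M M' : ℕ)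
    (hα0 : 0 < α) (hα1 : α < 1) (hB : 0 < B) (hT : 0 < T)
    (hM : 0 < M) (hMM : M < M')
    (hpos : 0 < α * M + α - 2)
    (hhalf : (B ^ (1 / α) * T * Real.exp 1 / (α * M + α - 2)) ^ α < 1 / 2) :
    ∀ t ∈ Set.Icc (0 : ℝ) T,
      |∑ n ∈ Finset.Icc (M + 1) M',
          (-B) ^ n * t ^ (α * n - 2) / Real.Gamma (α * n - 1)| <
        2 * B ^ (2 / α) *
          (B ^ (1 / α) * T * Real.exp 1 / (α * M + α - 2)) ^ (α * M + α - 2) := by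
  intro t ht
  obtain ⟨ht0, htT⟩ := ht
  set x : ℝ := α * M + α - 2 with hxdef
  set R : ℝ := B ^ (1/α) * T * Real.exp 1 / x with hRdef
  have hR : 0 < R :=
    div_pos (mul_pos (mul_pos (Real.rpow_pos_of_pos hB _) hT) (Real.exp_pos 1)) hpos
  set q : ℝ := R ^ α with hqdef
  have hq : 0 < q := Real.rpow_pos_of_pos hR α
  have key : ∀ n ∈ Finset.Icc (M+1) M',
      |(-B) ^ n * t ^ (α * n - 2) / Real.Gamma (α * n - 1)| ≤
        B ^ (2/α) * R ^ x * q ^ (n - (M+1)) := by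
    intro n hn
    obtain ⟨hn1, hn2⟩ := Finset.mem_Icc.mp hn
    have hn1' : (M:ℝ) + 1 ≤ (n:ℝ) := by exact_mod_cast hn1
    set y : ℝ := α * n - 2 with hydef
    have hxy : x ≤ y := by rw [hxdef, hydef]; nlinarith
    have hy : 0 < y := lt_of_lt_of_le hpos hxy
    have hG : 0 < Real.Gamma (α * n - 1) := Real.Gamma_pos_of_pos (by rw [hydef] at hy; linarith)
    have hy1 : α * (n:ℝ) - 1 = y + 1 := by rw [hydef]; ring
    have hGamma : y ^ y * Real.exp (-y) ≤ Real.Gamma (α * n - 1) := by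
      rw [hy1]; exact gamma_lb hy
    have habs : |(-B) ^ n * t ^ (α * n - 2) / Real.Gamma (α * n - 1)|
        = B ^ n * t ^ y / Real.Gamma (α * n - 1) := by
      rw [abs_div, abs_mul, abs_pow, abs_neg, abs_of_pos hB,
        abs_of_nonneg (Real.rpow_nonneg ht0 _), abs_of_pos hG]
    have step1 : B ^ n * t ^ y / Real.Gamma (α * n - 1)
        ≤ B ^ n * T ^ y / (y ^ y * Real.exp (-y)) := by
      apply div_le_div₀ (by positivity)
        (mul_le_mul_of_nonneg_left (Real.rpow_le_rpow ht0 htT hy.le) (by positivity))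
        (by positivity) hGamma
    have e1 : (B:ℝ) ^ n = B ^ (2/α) * (B ^ (1/α)) ^ y := by
      rw [← Real.rpow_natCast B n, ← Real.rpow_mul hB.le, ← Real.rpow_add hB]
      congr 1
      rw [hydef]
      field_simp
      ring
    have e2 : Real.exp 1 ^ y = Real.exp y := Real.exp_one_rpow y
    have e3 : (B ^ (1/α) * T * Real.exp 1 / y) ^ y
        = (B ^ (1/α)) ^ y * T ^ y * Real.exp 1 ^ y / y ^ y := by
      rw [Real.div_rpow (by positivity) hy.le,
        Real.mul_rpow (by positivity) (by positivity),
        Real.mul_rpow (by positivity) (by positivity)]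
    have step2 : B ^ n * T ^ y / (y ^ y * Real.exp (-y))
        = B ^ (2/α) * (B ^ (1/α) * T * Real.exp 1 / y) ^ y := by
      rw [e3, e1, e2, Real.exp_neg]
      have hyy : (0:ℝ) < y ^ y := Real.rpow_pos_of_pos hy y
      field_simp
    have hb : B ^ (1/α) * T * Real.exp 1 / y ≤ R := by
      rw [hRdef]
      exact div_le_div_of_nonneg_left (by positivity) hpos hxy
    have step3 : (B ^ (1/α) * T * Real.exp 1 / y) ^ y ≤ R ^ y :=
      Real.rpow_le_rpow (by positivity) hb hy.le
    have hk : y = x + α * ((n - (M+1) : ℕ) : ℝ) := by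
      rw [Nat.cast_sub hn1, hxdef, hydef]
      push_cast
      ring
    have e4 : R ^ y = R ^ x * q ^ (n - (M+1)) := by
      rw [hk, Real.rpow_add hR, hqdef, Real.rpow_mul hR.le, Real.rpow_natCast]
    rw [habs]
    calc B ^ n * t ^ y / Real.Gamma (α * n - 1)
        ≤ B ^ n * T ^ y / (y ^ y * Real.exp (-y)) := step1
      _ = B ^ (2/α) * (B ^ (1/α) * T * Real.exp 1 / y) ^ y := step2
      _ ≤ B ^ (2/α) * R ^ y :=
          mul_le_mul_of_nonneg_left step3 (by positivity)
      _ = B ^ (2/α) * R ^ x * q ^ (n - (M+1)) := by rw [e4, mul_assoc]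
  have hsum : ∑ n ∈ Finset.Icc (M+1) M', q ^ (n - (M+1)) < 2 := by
    rw [← Finset.Ico_add_one_right_eq_Icc, Finset.sum_Ico_eq_sum_range]
    simp only [Nat.add_sub_cancel_left, Nat.add_sub_cancel, add_tsub_cancel_left]
    set K := M' + 1 - (M + 1)
    have hgs := geom_sum_mul q K
    have hpow : (0:ℝ) < q ^ K := pow_pos hq K
    have hnn : (0:ℝ) ≤ ∑ i ∈ Finset.range K, q ^ i :=
      Finset.sum_nonneg fun i _ => pow_nonneg hq.le i
    nlinarith [hhalf]
  have hpos2 : 0 < B ^ (2/α) * R ^ x :=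
    mul_pos (Real.rpow_pos_of_pos hB _) (Real.rpow_pos_of_pos hR _)
  calc |∑ n ∈ Finset.Icc (M + 1) M',
          (-B) ^ n * t ^ (α * n - 2) / Real.Gamma (α * n - 1)|
      ≤ ∑ n ∈ Finset.Icc (M + 1) M',
          |(-B) ^ n * t ^ (α * n - 2) / Real.Gamma (α * n - 1)| :=
        Finset.abs_sum_le_sum_abs _ _
    _ ≤ ∑ n ∈ Finset.Icc (M + 1) M', B ^ (2/α) * R ^ x * q ^ (n - (M+1)) :=
        Finset.sum_le_sum key
    _ = B ^ (2/α) * R ^ x * ∑ n ∈ Finset.Icc (M + 1) M', q ^ (n - (M+1)) := by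
        rw [Finset.mul_sum]
    _ < B ^ (2/α) * R ^ x * 2 := by
        exact mul_lt_mul_of_pos_left hsum hpos2
    _ = 2 * B ^ (2/α) * R ^ x := by ring
end

section
/- Let 0 < α < 1 and B ∈ ℝ, and let y(t) = E_α(−B t^α) = ∑_{n=0}^∞ (−B t^α)^n / Γ(αn + 1). Then for every t > 0 the Caputo derivative of y of order α exists and satisfies D^α y(t) = −B E_α(−B t^α); in particular y(0) = 1, so y solves the two-term fractional relaxation equation y^{(α)}(t) + B y(t) = 0 with y(0) = 1. -/
set_option maxHeartbeats 2000000

/-- The one-parameter Mittag-Leffler function `E_α(x) = ∑_{n=0}^∞ xⁿ/Γ(αn+1)`. -/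
noncomputable def mittagLeffler (α x : ℝ) : ℝ :=
  ∑' n : ℕ, x ^ n / Real.Gamma (α * n + 1)

/-- The Caputo fractional derivative of order `α` (for `0 < α < 1`) with base point `0`:
`D^α y(t) = (1/Γ(1−α)) ∫₀ᵗ (t−ξ)^{−α} y'(ξ) dξ`. -/
noncomputable def caputoDeriv (α : ℝ) (y : ℝ → ℝ) : ℝ → ℝ :=
  fun t => (1 / Real.Gamma (1 - α)) * ∫ ξ in (0 : ℝ)..t, (t - ξ) ^ (-α) * deriv y ξ

open Real MeasureTheory

namespace ML

lemma gamma_floor_bound : ∃ c > 0, ∀ s : ℝ, 1 ≤ s →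
    c * (Nat.factorial (Nat.floor (s - 1)) : ℝ) ≤ Real.Gamma s := by
  have hcont : ContinuousOn Real.Gamma (Set.Icc 1 2) := by
    intro x hx
    have h1 : (1:ℝ) ≤ x := hx.1
    refine (Real.differentiableAt_Gamma (fun m => ?_)).continuousAt.continuousWithinAt
    have : (0:ℝ) ≤ m := Nat.cast_nonneg m
    intro h; rw [h] at h1; linarith
  obtain ⟨x₀, hx₀, hmin⟩ := isCompact_Icc.exists_isMinOn (Set.nonempty_Icc.2 one_le_two) hcont
  set c := Real.Gamma x₀ with hc
  have hcpos : 0 < c := Real.Gamma_pos_of_pos (by linarith [hx₀.1])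
  refine ⟨c, hcpos, ?_⟩
  have key : ∀ k : ℕ, ∀ x : ℝ, x ∈ Set.Icc (1:ℝ) 2 → c * (k.factorial : ℝ) ≤ Real.Gamma (x + k) := by
    intro k
    induction k with
    | zero => intro x hx; simpa using hmin hx
    | succ k ih =>
      intro x hx
      have hxk : (1:ℝ) ≤ x + k := by
        have := hx.1; have : (0:ℝ) ≤ k := Nat.cast_nonneg k; linarith [hx.1]
      have : Real.Gamma (x + (k+1:ℕ)) = (x + k) * Real.Gamma (x + k) := by
        rw [show (x + (k+1:ℕ) : ℝ) = (x + k) + 1 by push_cast; ring]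
        exact Real.Gamma_add_one (by linarith)
      rw [this]
      have h1 : c * (k.factorial : ℝ) ≤ Real.Gamma (x + k) := ih x hx
      have h2 : ((k:ℝ) + 1) ≤ x + k := by linarith [hx.1]
      calc c * ((k+1).factorial : ℝ) = ((k:ℝ)+1) * (c * k.factorial) := by
            push_cast [Nat.factorial_succ]; ring
        _ ≤ ((k:ℝ)+1) * Real.Gamma (x + k) := by
            apply mul_le_mul_of_nonneg_left h1 (by positivity)
        _ ≤ (x + k) * Real.Gamma (x + k) := by
            apply mul_le_mul_of_nonneg_right h2
            exact Real.Gamma_nonneg_of_nonneg (by linarith)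
  intro s hs
  set k := Nat.floor (s - 1) with hk
  have h0 : (0:ℝ) ≤ s - 1 := by linarith
  have hk1 : (k:ℝ) ≤ s - 1 := Nat.floor_le h0
  have hk2 : s - 1 < k + 1 := Nat.lt_floor_add_one _
  have : s = (s - k) + k := by ring
  rw [this]
  exact key k (s - k) ⟨by linarith, by linarith⟩

lemma summable_aux {α : ℝ} (hα : 0 < α) (β r : ℝ) (hβ : 0 ≤ β) (hr : 0 ≤ r) :
    Summable (fun n : ℕ => r ^ n / Real.Gamma (α * n + β)) := by
  obtain ⟨c, hc, hΓ⟩ := ML.gamma_floor_bound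
  obtain ⟨m, hm⟩ := exists_nat_ge (max 1 ((2*r+1) ^ (1/α)))
  have hm1 : (1:ℝ) ≤ m := le_trans (le_max_left _ _) hm
  have hm0 : (0:ℝ) ≤ m := by linarith
  have hmα : 2*r+1 ≤ (m:ℝ) ^ α := by
    have h1 : ((2*r+1) ^ (1/α)) ^ α ≤ (m:ℝ) ^ α :=
      Real.rpow_le_rpow (Real.rpow_nonneg (by linarith) _)
        (le_trans (le_max_right _ _) hm) hα.le
    rwa [← Real.rpow_mul (by linarith), one_div, inv_mul_cancel₀ hα.ne',
      Real.rpow_one] at h1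
  have hmαpos : (0:ℝ) < (m:ℝ) ^ α := lt_of_lt_of_le (by linarith) hmα
  have hhalf : r / (m:ℝ)^α ≤ 1/2 := by
    rw [div_le_div_iff₀ hmαpos two_pos]; nlinarith
  obtain ⟨N, hN⟩ := exists_nat_ge (1/α)
  have hN1 : ∀ n : ℕ, N ≤ n → 1 ≤ α * n + β := by
    intro n hn
    have : (1/α) ≤ (n:ℝ) := le_trans hN (by exact_mod_cast hn)
    have h2 : 1 ≤ α * n := (div_le_iff₀' hα).mp this
    linarith
  rw [← summable_nat_add_iff N]
  set C := c⁻¹ * (m:ℝ) ^ ((m:ℝ) + 2 - β) with hC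
  have hCpos : 0 < C := by positivity
  refine Summable.of_nonneg_of_le
    (fun n => div_nonneg (pow_nonneg hr _) (Real.Gamma_nonneg_of_nonneg (by positivity)))
    (fun n => ?_)
    (Summable.mul_left C (summable_geometric_of_lt_one (r := (1/2:ℝ)) (by norm_num) (by norm_num)))
  set s := α * (n + N : ℕ) + β with hs
  have hs1 : 1 ≤ s := hN1 _ (by omega)
  set k := Nat.floor (s - 1) with hk
  have hks : s - 2 < (k:ℝ) := by
    have := Nat.lt_floor_add_one (s - 1); linarith [Nat.lt_floor_add_one (s-1)]
  have hfac1 : ((m:ℝ))^((k - m : ℕ):ℕ) ≤ (k.factorial : ℝ) := by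
    rcases le_or_gt m k with h | h
    · have h2 := Nat.factorial_mul_pow_le_factorial (m := m) (n := k - m)
      rw [Nat.add_sub_cancel' h] at h2
      calc ((m:ℝ))^(k-m : ℕ) ≤ ((m:ℝ)+1)^(k-m:ℕ) := by
            apply pow_le_pow_left₀ hm0; linarith
        _ ≤ (m.factorial : ℝ) * ((m:ℝ)+1)^(k-m:ℕ) := by
            nlinarith [pow_nonneg (by linarith : (0:ℝ) ≤ (m:ℝ)+1) (k - m),
              (Nat.one_le_cast (α := ℝ)).mpr m.factorial_pos]
        _ ≤ (k.factorial : ℝ) := by exact_mod_cast h2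
    · simp only [Nat.sub_eq_zero_of_le h.le, pow_zero]
      exact_mod_cast Nat.one_le_iff_ne_zero.mpr k.factorial_ne_zero
  have hfac2 : (m:ℝ) ^ (s - 2 - (m:ℝ)) ≤ (k.factorial : ℝ) := by
    refine le_trans ?_ hfac1
    rw [← Real.rpow_natCast (m:ℝ) (k - m)]
    apply Real.rpow_le_rpow_of_exponent_le hm1
    have : (k:ℝ) - (m:ℝ) ≤ ((k - m : ℕ) : ℝ) := by
      rcases le_or_gt m k with h | h
      · rw [Nat.cast_sub h]
      · have : (k:ℝ) ≤ (m:ℝ) := by exact_mod_cast h.le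
        simp [Nat.sub_eq_zero_of_le h.le]; linarith
    linarith
  have hΓs : c * (m:ℝ) ^ (s - 2 - (m:ℝ)) ≤ Real.Gamma s :=
    le_trans (by nlinarith [Real.rpow_nonneg hm0 (s - 2 - (m:ℝ))]) (hΓ s hs1)
  have hΓpos : 0 < Real.Gamma s := Real.Gamma_pos_of_pos (by linarith)
  have hrw : (m:ℝ) ^ (s - 2 - (m:ℝ)) = (m:ℝ) ^ (β - 2 - (m:ℝ)) * ((m:ℝ)^α)^((n + N : ℕ):ℕ) := by
    rw [← Real.rpow_natCast ((m:ℝ)^α) _, ← Real.rpow_mul hm0, ← Real.rpow_add (by linarith)]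
    congr 1
    rw [hs]; push_cast; ring
  have hA : (0:ℝ) < (m:ℝ) ^ (β - 2 - (m:ℝ)) := Real.rpow_pos_of_pos (by linarith) _
  have hkey : r ^ ((n+N:ℕ)) / (c * ((m:ℝ) ^ (β - 2 - (m:ℝ)) * ((m:ℝ)^α)^((n+N:ℕ)))) =
      c⁻¹ * ((m:ℝ) ^ (β - 2 - (m:ℝ)))⁻¹ * (r/((m:ℝ)^α))^((n+N:ℕ)) := by
    rw [div_pow]; field_simp
  have hAinv : ((m:ℝ) ^ (β - 2 - (m:ℝ)))⁻¹ = (m:ℝ) ^ ((m:ℝ) + 2 - β) := by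
    rw [← Real.rpow_neg hm0]; ring_nf
  have hbound : r ^ ((n + N:ℕ)) / Real.Gamma s ≤ C * (1/2:ℝ)^((n + N :ℕ)) := by
    have h1 : r ^ ((n+N:ℕ)) / Real.Gamma s
        ≤ r ^ ((n+N:ℕ)) / (c * ((m:ℝ) ^ (β - 2 - (m:ℝ)) * ((m:ℝ)^α)^((n+N:ℕ)))) := by
      rw [← hrw]
      exact div_le_div_of_nonneg_left (pow_nonneg hr _) (by positivity) hΓs
    refine le_trans h1 ?_
    rw [hkey, hAinv, hC]
    apply mul_le_mul_of_nonneg_left _ (by positivity)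
    exact pow_le_pow_left₀ (by positivity) hhalf _
  calc r ^ (n + N) / Real.Gamma (α * ↑(n + N) + β) ≤ C * (1/2:ℝ)^(n+N) := hbound
    _ ≤ C * (1/2:ℝ)^n := by
      apply mul_le_mul_of_nonneg_left _ hCpos.le
      apply pow_le_pow_of_le_one (by norm_num) (by norm_num) (by omega)

/-- The term-wise derivative of the Mittag-Leffler series. -/
noncomputable def mlDeriv (α B ξ : ℝ) : ℝ :=
  ∑' n : ℕ, (-B) ^ (n + 1) * ξ ^ (α * (n + 1) - 1) / Real.Gamma (α * (n + 1))

lemma abs_deriv_term {α : ℝ} (hα0 : 0 < α) (B ξ : ℝ) (hξ : 0 < ξ) (n : ℕ) :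
    |(-B) ^ (n + 1) * ξ ^ (α * (n + 1) - 1) / Real.Gamma (α * (n + 1))|
      = |B| * ξ ^ (α - 1) * ((|B| * ξ ^ α) ^ n / Real.Gamma (α * n + α)) := by
  have hΓpos : 0 < Real.Gamma (α * ((n:ℝ) + 1)) := Real.Gamma_pos_of_pos (by positivity)
  rw [abs_div, abs_mul, abs_pow, abs_neg]
  push_cast
  rw [abs_of_pos hΓpos, abs_of_pos (Real.rpow_pos_of_pos hξ _)]
  have h1 : ξ ^ (α * ((n:ℝ)+1) - 1) = ξ ^ (α-1) * (ξ ^ α) ^ n := by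
    rw [← Real.rpow_natCast (ξ ^ α) n, ← Real.rpow_mul hξ.le, ← Real.rpow_add hξ]
    ring_nf
  rw [h1, mul_pow, (by ring : α * ((n:ℝ)+1) = α*(n:ℝ)+α)]
  ring

lemma summable_deriv_term {α : ℝ} (hα0 : 0 < α) (B ξ : ℝ) (hξ : 0 < ξ) :
    Summable (fun n : ℕ => (-B) ^ (n + 1) * ξ ^ (α * (n + 1) - 1) / Real.Gamma (α * (n + 1))) := by
  have h := (ML.summable_aux hα0 α (|B| * ξ ^ α) hα0.le (by positivity)).mul_left
    (|B| * ξ ^ (α - 1))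
  apply Summable.of_abs
  refine Summable.of_nonneg_of_le (fun n => abs_nonneg _) (fun n => ?_) h
  rw [abs_deriv_term hα0 B ξ hξ n]

lemma hasDerivAt_ml {α : ℝ} (hα0 : 0 < α) (hα1 : α < 1) (B ξ : ℝ) (hξ : 0 < ξ) :
    HasDerivAt (fun s : ℝ => mittagLeffler α (-B * s ^ α)) (mlDeriv α B ξ) ξ := by
  set a := ξ/2 with ha
  set b := ξ+1 with hb
  have hapos : 0 < a := by positivity
  have hbpos : 0 < b := by positivity
  have hbα : (0:ℝ) < b ^ α := Real.rpow_pos_of_pos hbpos _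
  set g : ℕ → ℝ → ℝ := fun n s => (-B * s ^ α) ^ n / Real.Gamma (α * n + 1) with hg_def
  set g' : ℕ → ℝ → ℝ := fun n s =>
    ((n:ℝ) * (-B * s ^ α) ^ (n - 1) * (-B * (α * s ^ (α - 1)))) / Real.Gamma (α * n + 1)
    with hg'_def
  set u : ℕ → ℝ := fun n => a ^ (α-1) / b ^ α * ((|B| * b ^ α) ^ n / Real.Gamma (α * n)) with hu_def
  have hu : Summable u := by
    have := (ML.summable_aux hα0 0 (|B| * b ^ α) le_rfl (by positivity)).mul_left
      (a ^ (α-1) / b ^ α)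
    simpa [hu_def] using this
  have hmem : ξ ∈ Set.Ioo a b := ⟨by rw [ha]; linarith, by rw [hb]; linarith⟩
  have hg : ∀ (n : ℕ) (s : ℝ), s ∈ Set.Ioo a b → HasDerivAt (g n) (g' n s) s := by
    intro n s hs
    have hspos : 0 < s := lt_trans hapos hs.1
    have inner : HasDerivAt (fun s : ℝ => -B * s ^ α) (-B * (α * s ^ (α-1))) s :=
      (Real.hasDerivAt_rpow_const (Or.inl hspos.ne')).const_mul (-B)
    exact (inner.pow n).div_const _
  have habs : ∀ (n : ℕ) (s : ℝ), 0 < s →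
      ‖g' n s‖ = ((n:ℝ) * (|B| * s ^ α) ^ (n - 1) * (|B| * (α * s ^ (α - 1)))) /
        Real.Gamma (α * n + 1) := by
    intro n s hs
    have hΓpos : 0 < Real.Gamma (α * n + 1) := Real.Gamma_pos_of_pos (by positivity)
    rw [hg'_def]
    simp only [Real.norm_eq_abs, abs_div, abs_mul, abs_pow, abs_neg, abs_of_pos hΓpos,
      abs_of_pos (Real.rpow_pos_of_pos hs _), Nat.abs_cast,
      abs_of_pos hα0]
  have hg' : ∀ (n : ℕ) (s : ℝ), s ∈ Set.Ioo a b → ‖g' n s‖ ≤ u n := by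
    intro n s hs
    have hspos : 0 < s := lt_trans hapos hs.1
    rw [habs n s hspos]
    match n with
    | 0 => simp [hu_def, Real.Gamma_zero]
    | (m+1) =>
      have hΓpos : 0 < Real.Gamma (α * (m+1:ℕ)) := Real.Gamma_pos_of_pos (by positivity)
      have hΓ1 : Real.Gamma (α * (m+1:ℕ) + 1) = α * (m+1:ℕ) * Real.Gamma (α * (m+1:ℕ)) :=
        Real.Gamma_add_one (by positivity)
      rw [hΓ1]
      have hn1 : (m+1) - 1 = m := rfl
      rw [hn1]
      have hsb : s ^ α ≤ b ^ α := Real.rpow_le_rpow hspos.le hs.2.le hα0.le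
      have hsa : s ^ (α-1) ≤ a ^ (α-1) :=
        Real.rpow_le_rpow_of_nonpos hapos hs.1.le (by linarith)
      have hnum : (|B| * s ^ α) ^ m * (|B| * (α * s ^ (α-1)))
          ≤ (|B| * b ^ α) ^ m * (|B| * (α * a ^ (α-1))) := by
        apply mul_le_mul
        · exact pow_le_pow_left₀ (by positivity)
            (mul_le_mul_of_nonneg_left hsb (abs_nonneg B)) m
        · exact mul_le_mul_of_nonneg_left
            (mul_le_mul_of_nonneg_left hsa hα0.le) (abs_nonneg B)
        · positivity
        · positivity
      have hM : (0:ℝ) < (m:ℝ)+1 := by positivity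
      have heq : ((m+1:ℕ):ℝ) * ((|B| * b^α)^m * (|B| * (α * a ^ (α-1)))) /
          (α * ((m+1:ℕ):ℝ) * Real.Gamma (α * (m+1:ℕ))) = u (m+1) := by
        rw [hu_def]
        push_cast
        field_simp
        ring
      calc ((m+1:ℕ):ℝ) * (|B| * s ^ α) ^ m * (|B| * (α * s ^ (α - 1))) /
            (α * ((m+1:ℕ):ℝ) * Real.Gamma (α * (m+1:ℕ)))
          ≤ ((m+1:ℕ):ℝ) * ((|B| * b^α)^m * (|B| * (α * a ^ (α-1)))) /
            (α * ((m+1:ℕ):ℝ) * Real.Gamma (α * (m+1:ℕ))) := by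
            apply div_le_div_of_nonneg_right ?_ (by positivity)
            · push_cast; nlinarith [hnum]
        _ = u (m+1) := heq
  have hg0 : Summable fun n => g n ξ := by
    have h := ML.summable_aux hα0 1 (|B| * ξ ^ α) (by norm_num) (by positivity)
    apply Summable.of_abs
    refine Summable.of_nonneg_of_le (fun n => abs_nonneg _) (fun n => ?_) h
    have hΓpos : 0 < Real.Gamma (α * n + 1) := Real.Gamma_pos_of_pos (by positivity)
    rw [hg_def]
    apply le_of_eq
    simp [abs_div, abs_mul, abs_pow, abs_neg, abs_of_pos hΓpos,
      abs_of_pos (Real.rpow_pos_of_pos hξ _)]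
  have hmain := hasDerivAt_tsum_of_isPreconnected hu isOpen_Ioo
    (isPreconnected_Ioo) hg hg' hmem hg0 hmem
  have hfun : (fun z => ∑' n, g n z) = (fun s : ℝ => mittagLeffler α (-B * s ^ α)) := rfl
  rw [hfun] at hmain
  have hval : (∑' n, g' n ξ) = mlDeriv α B ξ := by
    have hsum : Summable (fun n => g' n ξ) :=
      Summable.of_norm_bounded hu (fun n => hg' n ξ hmem)
    rw [Summable.tsum_eq_zero_add hsum]
    have h0 : g' 0 ξ = 0 := by simp [hg'_def]
    rw [h0, zero_add, mlDeriv]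
    apply tsum_congr
    intro n
    have hΓpos : 0 < Real.Gamma (α * ((n:ℝ)+1)) := Real.Gamma_pos_of_pos (by positivity)
    have hΓ1 : Real.Gamma (α * ((n:ℝ)+1) + 1) = α * ((n:ℝ)+1) * Real.Gamma (α * ((n:ℝ)+1)) :=
      Real.Gamma_add_one (by positivity)
    have hpow : (-B * ξ ^ α) ^ n = (-B)^n * ξ ^ (α * n) := by
      rw [mul_pow, ← Real.rpow_natCast (ξ ^ α) n, ← Real.rpow_mul hξ.le]
    have hx : ξ ^ (α * (n:ℝ)) * ξ ^ (α - 1) = ξ ^ (α * ((n:ℝ)+1) - 1) := by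
      rw [← Real.rpow_add hξ]; ring_nf
    rw [hg'_def]
    simp only []
    have hn1 : (n+1) - 1 = n := rfl
    rw [hn1, hpow]
    push_cast
    rw [hΓ1]
    field_simp
    rw [show ((n:ℝ) + 1) * α - 1 = α * ((n:ℝ)+1) - 1 by ring, ← hx,
      show (n:ℝ) * α = α * n by ring]
    ring
  rwa [hval] at hmain

lemma real_beta {u v : ℝ} (hu : 0 < u) (hv : 0 < v) :
    ∫ x in (0:ℝ)..1, x ^ (u-1) * (1-x) ^ (v-1)
      = Real.Gamma u * Real.Gamma v / Real.Gamma (u+v) := by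
  have hC := Complex.Gamma_mul_Gamma_eq_betaIntegral
    (s := (u:ℂ)) (t := (v:ℂ)) (by simpa using hu) (by simpa using hv)
  have hBeta : Complex.betaIntegral (u:ℂ) (v:ℂ)
      = ((∫ x in (0:ℝ)..1, x ^ (u-1) * (1-x) ^ (v-1) : ℝ) : ℂ) := by
    rw [Complex.betaIntegral, ← intervalIntegral.integral_ofReal]
    apply intervalIntegral.integral_congr
    intro x hx
    rw [Set.uIcc_of_le (by norm_num : (0:ℝ) ≤ 1)] at hx
    have hx0 : 0 ≤ x := hx.1
    have hx1 : 0 ≤ 1 - x := by linarith [hx.2]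
    push_cast
    rw [Complex.ofReal_cpow hx0, Complex.ofReal_cpow hx1]
    push_cast
    ring
  rw [hBeta, Complex.Gamma_ofReal, Complex.Gamma_ofReal, ← Complex.ofReal_add,
    Complex.Gamma_ofReal, ← Complex.ofReal_mul, ← Complex.ofReal_mul] at hC
  have hreal : Real.Gamma u * Real.Gamma v
      = Real.Gamma (u+v) * ∫ x in (0:ℝ)..1, x ^ (u-1) * (1-x) ^ (v-1) :=
    Complex.ofReal_inj.mp hC
  have hne : Real.Gamma (u+v) ≠ 0 := (Real.Gamma_pos_of_pos (by linarith)).ne'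
  field_simp [hreal]
  rw [hreal]; ring

lemma beta_integrable01 {α β : ℝ} (hα1 : α < 1) (hβ : 0 < β) :
    IntervalIntegrable (fun x : ℝ => x ^ (β-1) * (1-x) ^ (-α)) volume 0 1 := by
  have hc := Complex.betaIntegral_convergent (u := (β:ℂ)) (v := ((1-α:ℝ):ℂ))
    (by simpa using hβ) (by simpa using (by linarith : (0:ℝ) < 1 - α))
  rw [intervalIntegrable_iff] at hc ⊢
  have := hc.re
  apply (IntegrableOn.congr_fun this ?_ measurableSet_uIoc)
  intro x hx
  rw [Set.uIoc_of_le (by norm_num : (0:ℝ) ≤ 1)] at hx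
  have hx0 : 0 ≤ x := hx.1.le
  have hx1 : 0 ≤ 1 - x := by linarith [hx.2]
  have h1 : ((x:ℂ) ^ ((β:ℂ) - 1) * (1 - (x:ℂ)) ^ (((1-α:ℝ):ℂ) - 1))
      = ((x ^ (β-1) * (1-x) ^ (-α) : ℝ) : ℂ) := by
    rw [Complex.ofReal_mul, Complex.ofReal_cpow hx0, Complex.ofReal_cpow hx1]
    push_cast
    norm_num
  show ((x:ℂ) ^ ((β:ℂ) - 1) * (1 - (x:ℂ)) ^ (((1-α:ℝ):ℂ) - 1)).re = _
  rw [h1, Complex.ofReal_re]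

lemma beta_integrable {α t β : ℝ} (hα1 : α < 1) (ht : 0 < t) (hβ : 0 < β) :
    IntervalIntegrable (fun ξ : ℝ => (t-ξ) ^ (-α) * ξ ^ (β-1)) volume 0 t := by
  have h01 := beta_integrable01 hα1 hβ
  have h2 := h01.comp_mul_left (c := t⁻¹)
  have ht' : t⁻¹ ≠ 0 := inv_ne_zero ht.ne'
  rw [show (0:ℝ) / t⁻¹ = 0 by simp, show (1:ℝ) / t⁻¹ = t by field_simp] at h2
  have h3 := h2.const_mul (t ^ (β-1) * t ^ (-α))
  rw [intervalIntegrable_iff] at h3 ⊢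
  refine IntegrableOn.congr_fun h3 ?_ measurableSet_uIoc
  intro ξ hξ
  rw [Set.uIoc_of_le ht.le] at hξ
  have hξ0 : 0 ≤ ξ := hξ.1.le
  have htξ : 0 ≤ t - ξ := by linarith [hξ.2]
  have e1 : (t⁻¹*ξ) ^ (β-1) = ξ ^ (β-1) / t ^ (β-1) := by
    rw [inv_mul_eq_div, Real.div_rpow hξ0 ht.le]
  have e2 : 1 - t⁻¹*ξ = (t-ξ)/t := by field_simp
  have e3 : ((t-ξ)/t) ^ (-α) = (t-ξ) ^ (-α) / t ^ (-α) := Real.div_rpow htξ ht.le _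
  have hne1 : t ^ (β-1) ≠ 0 := (Real.rpow_pos_of_pos ht _).ne'
  have hne2 : t ^ (-α) ≠ 0 := (Real.rpow_pos_of_pos ht _).ne'
  simp only [e1, e2, e3]
  field_simp

lemma ibeta {α t β : ℝ} (hα1 : α < 1) (ht : 0 < t) (hβ : 0 < β) :
    ∫ ξ in (0:ℝ)..t, (t-ξ) ^ (-α) * ξ ^ (β-1)
      = Real.Gamma (1-α) * Real.Gamma β / Real.Gamma (β+1-α) * t ^ (β-α) := by
  have hsub := intervalIntegral.integral_comp_mul_left
    (a := (0:ℝ)) (b := 1) (c := t) (f := fun ξ : ℝ => (t-ξ) ^ (-α) * ξ ^ (β-1)) ht.ne'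
  rw [mul_zero, mul_one, smul_eq_mul] at hsub
  have hsub' : (∫ ξ in (0:ℝ)..t, (t-ξ) ^ (-α) * ξ ^ (β-1))
      = t * ∫ x in (0:ℝ)..1, (t - t*x) ^ (-α) * (t*x) ^ (β-1) := by
    rw [hsub, ← mul_assoc, mul_inv_cancel₀ ht.ne', one_mul]
  rw [hsub']
  have hcongr : (∫ x in (0:ℝ)..1, (t - t*x) ^ (-α) * (t*x) ^ (β-1))
      = ∫ x in (0:ℝ)..1, (t ^ (-α) * t ^ (β-1)) * (x ^ (β-1) * (1-x) ^ ((1-α)-1)) := by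
    apply intervalIntegral.integral_congr
    intro x hx
    rw [Set.uIcc_of_le (by norm_num : (0:ℝ) ≤ 1)] at hx
    have hx0 : 0 ≤ x := hx.1
    have hx1 : 0 ≤ 1 - x := by linarith [hx.2]
    have e1 : t - t*x = t * (1-x) := by ring
    simp only []
    rw [e1, Real.mul_rpow ht.le hx1, Real.mul_rpow ht.le hx0]
    ring_nf
  rw [hcongr, intervalIntegral.integral_const_mul, real_beta hβ (by linarith : (0:ℝ) < 1-α)]
  have e2 : β + (1-α) = β + 1 - α := by ring
  rw [e2]
  have e3 : t * (t ^ (-α) * t ^ (β-1)) = t ^ (β-α) := by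
    rw [← Real.rpow_add ht, mul_comm, ← Real.rpow_add_one ht.ne']
    ring_nf
  rw [← mul_assoc, e3]
  ring

end ML

/-- `y(t) = E_α(−B t^α)` satisfies `y(0) = 1` and, for every `t > 0`, the Caputo derivative
of `y` of order `α` exists and equals `−B E_α(−B t^α)`; in particular `y` solves the
fractional relaxation equation `y^{(α)} + B y = 0`, `y(0) = 1`. -/
theorem mittagLeffler_solves_relaxation (α B : ℝ) (hα0 : 0 < α) (hα1 : α < 1)
    (y : ℝ → ℝ) (hy : ∀ t : ℝ, y t = mittagLeffler α (-B * t ^ α)) :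
    y 0 = 1 ∧
    ∀ t : ℝ, 0 < t →
      IntervalIntegrable (fun ξ => (t - ξ) ^ (-α) * deriv y ξ)
        MeasureTheory.volume 0 t ∧
      caputoDeriv α y t = -B * mittagLeffler α (-B * t ^ α) ∧
      caputoDeriv α y t + B * y t = 0 := by
  have hyf : y = fun s => mittagLeffler α (-B * s ^ α) := funext hy
  constructor
  · rw [hy 0, Real.zero_rpow hα0.ne', mul_zero, mittagLeffler]
    rw [tsum_eq_single 0 (fun n hn => by simp [zero_pow hn])]
    simp [Real.Gamma_one]
  intro t ht
  -- derivative identification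
  have hderiv : ∀ ξ : ℝ, 0 < ξ → deriv y ξ = ML.mlDeriv α B ξ := by
    intro ξ hξ
    rw [hyf]
    exact (ML.hasDerivAt_ml hα0 hα1 B ξ hξ).deriv
  have hΓ1α : 0 < Real.Gamma (1-α) := Real.Gamma_pos_of_pos (by linarith)
  set F : ℕ → ℝ → ℝ := fun n ξ =>
    (t-ξ) ^ (-α) * ((-B) ^ (n+1) * ξ ^ (α * (n+1) - 1) / Real.Gamma (α * (n+1))) with hF
  have hβn : ∀ n : ℕ, (0:ℝ) < α * ((n:ℝ)+1) := fun n => by positivity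
  have hptwise : ∀ ξ ∈ Set.Ioc (0:ℝ) t, (t-ξ) ^ (-α) * deriv y ξ = ∑' n, F n ξ := by
    intro ξ hξ
    rw [hderiv ξ hξ.1, ML.mlDeriv, ← tsum_mul_left]
  have hFint : ∀ n : ℕ, IntegrableOn (F n) (Set.Ioc 0 t) volume := by
    intro n
    have h1 := (ML.beta_integrable hα1 ht (hβn n)).const_mul
      ((-B) ^ (n+1) / Real.Gamma (α * ((n:ℝ)+1)))
    rw [intervalIntegrable_iff, Set.uIoc_of_le ht.le] at h1
    refine IntegrableOn.congr_fun h1 ?_ measurableSet_Ioc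
    intro ξ _
    simp only [hF]
    push_cast
    ring
  have hFval : ∀ n : ℕ, (∫ ξ in Set.Ioc (0:ℝ) t, F n ξ)
      = (Real.Gamma (1-α) * -B) * ((-B * t ^ α) ^ n / Real.Gamma (α * n + 1)) := by
    intro n
    have hInt : (∫ ξ in Set.Ioc (0:ℝ) t, F n ξ) = ∫ ξ in (0:ℝ)..t, F n ξ :=
      (intervalIntegral.integral_of_le ht.le).symm
    have hpull : (∫ ξ in (0:ℝ)..t, F n ξ)
        = ((-B) ^ (n+1) / Real.Gamma (α * ((n:ℝ)+1))) *
          ∫ ξ in (0:ℝ)..t, (t-ξ) ^ (-α) * ξ ^ (α * ((n:ℝ)+1) - 1) := by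
      rw [← intervalIntegral.integral_const_mul]
      apply intervalIntegral.integral_congr
      intro ξ _
      simp only [hF]
      push_cast
      ring
    rw [hInt, hpull, ML.ibeta hα1 ht (hβn n)]
    have hΓpos : 0 < Real.Gamma (α * ((n:ℝ)+1)) := Real.Gamma_pos_of_pos (hβn n)
    have hΓpos2 : 0 < Real.Gamma (α * (n:ℝ) + 1) := Real.Gamma_pos_of_pos (by positivity)
    have e1 : α * ((n:ℝ)+1) + 1 - α = α * n + 1 := by ring
    have e2 : α * ((n:ℝ)+1) - α = α * n := by ring
    have e3 : t ^ (α * (n:ℝ)) = (t ^ α) ^ n := by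
      rw [← Real.rpow_natCast (t ^ α) n, ← Real.rpow_mul ht.le]
    rw [e1, e2, e3]
    field_simp
    ring
  have hFnormval : ∀ n : ℕ, (∫ ξ in Set.Ioc (0:ℝ) t, ‖F n ξ‖)
      = (Real.Gamma (1-α) * |B|) * ((|B| * t ^ α) ^ n / Real.Gamma (α * n + 1)) := by
    intro n
    have hΓpos : 0 < Real.Gamma (α * ((n:ℝ)+1)) := Real.Gamma_pos_of_pos (hβn n)
    have hΓpos2 : 0 < Real.Gamma (α * (n:ℝ) + 1) := Real.Gamma_pos_of_pos (by positivity)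
    have hcongr : (∫ ξ in Set.Ioc (0:ℝ) t, ‖F n ξ‖)
        = ∫ ξ in Set.Ioc (0:ℝ) t,
            (|B| ^ (n+1) / Real.Gamma (α * ((n:ℝ)+1))) * ((t-ξ) ^ (-α) * ξ ^ (α * ((n:ℝ)+1) - 1)) := by
      apply setIntegral_congr_fun measurableSet_Ioc
      intro ξ hξ
      have hξ0 : (0:ℝ) < ξ := hξ.1
      have htξ : (0:ℝ) ≤ t - ξ := by linarith [hξ.2]
      simp only [hF, Real.norm_eq_abs]
      rw [abs_mul, abs_div, abs_mul, abs_pow, abs_neg,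
        abs_of_nonneg (Real.rpow_nonneg htξ _),
        abs_of_nonneg (Real.rpow_nonneg hξ0.le _), abs_of_pos hΓpos]
      push_cast
      ring
    rw [hcongr, integral_const_mul, ← intervalIntegral.integral_of_le ht.le,
      ML.ibeta hα1 ht (hβn n)]
    have e1 : α * ((n:ℝ)+1) + 1 - α = α * n + 1 := by ring
    have e2 : α * ((n:ℝ)+1) - α = α * n := by ring
    have e3 : t ^ (α * (n:ℝ)) = (t ^ α) ^ n := by
      rw [← Real.rpow_natCast (t ^ α) n, ← Real.rpow_mul ht.le]
    rw [e1, e2, e3]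
    field_simp
    ring
  have hFsum : Summable (fun n => ∫ ξ in Set.Ioc (0:ℝ) t, ‖F n ξ‖) := by
    have h := (ML.summable_aux hα0 1 (|B| * t ^ α) (by norm_num) (by positivity)).mul_left
      (Real.Gamma (1-α) * |B|)
    exact h.congr (fun n => (hFnormval n).symm)
  have hswap := MeasureTheory.integral_tsum_of_summable_integral_norm
    (μ := volume.restrict (Set.Ioc (0:ℝ) t)) (F := F) hFint hFsum
  have hcap : caputoDeriv α y t = -B * mittagLeffler α (-B * t ^ α) := by
    rw [caputoDeriv]
    have h1 : (∫ ξ in (0:ℝ)..t, (t-ξ) ^ (-α) * deriv y ξ)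
        = ∫ ξ in Set.Ioc (0:ℝ) t, (t-ξ) ^ (-α) * deriv y ξ :=
      intervalIntegral.integral_of_le ht.le
    have h2 : (∫ ξ in Set.Ioc (0:ℝ) t, (t-ξ) ^ (-α) * deriv y ξ)
        = ∫ ξ in Set.Ioc (0:ℝ) t, ∑' n, F n ξ :=
      setIntegral_congr_fun measurableSet_Ioc hptwise
    have h4 : (∑' n, ∫ ξ in Set.Ioc (0:ℝ) t, F n ξ)
        = (Real.Gamma (1-α) * -B) * mittagLeffler α (-B * t ^ α) := by
      rw [tsum_congr hFval, tsum_mul_left, mittagLeffler]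
    rw [h1, h2, ← hswap, h4]
    field_simp
  -- the integrability statement
  have hKsum : Summable (fun n : ℕ => (|B| * t ^ α) ^ n / Real.Gamma (α * n + α)) :=
    ML.summable_aux hα0 α _ hα0.le (by positivity)
  set K := |B| * ∑' n : ℕ, (|B| * t ^ α) ^ n / Real.Gamma (α * n + α) with hK
  have hbound : ∀ ξ ∈ Set.Ioc (0:ℝ) t,
      ‖(t-ξ) ^ (-α) * deriv y ξ‖ ≤ K * ((t-ξ) ^ (-α) * ξ ^ (α-1)) := by
    intro ξ hξ
    have hξ0 : (0:ℝ) < ξ := hξ.1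
    have htξ : (0:ℝ) ≤ t - ξ := by linarith [hξ.2]
    rw [hderiv ξ hξ.1, Real.norm_eq_abs, abs_mul, abs_of_nonneg (Real.rpow_nonneg htξ _)]
    have hSξ : Summable (fun n : ℕ => (|B| * ξ ^ α) ^ n / Real.Gamma (α * n + α)) :=
      ML.summable_aux hα0 α _ hα0.le (by positivity)
    have habs : |ML.mlDeriv α B ξ| ≤ ξ ^ (α-1) * K := by
      have hterm : Summable (fun n : ℕ =>
          ‖(-B) ^ (n+1) * ξ ^ (α * (n+1) - 1) / Real.Gamma (α * (n+1))‖) := by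
        simp only [Real.norm_eq_abs]
        refine (hSξ.mul_left (|B| * ξ ^ (α-1))).congr (fun n => ?_)
        rw [ML.abs_deriv_term hα0 B ξ hξ0 n]
      have h1 : |ML.mlDeriv α B ξ| ≤ ∑' n : ℕ, ‖(-B) ^ (n+1) * ξ ^ (α * ((n:ℝ)+1) - 1) /
          Real.Gamma (α * ((n:ℝ)+1))‖ := by
        rw [ML.mlDeriv]
        exact (norm_tsum_le_tsum_norm hterm)
      refine le_trans h1 ?_
      have h2 : ∀ n : ℕ, ‖(-B) ^ (n+1) * ξ ^ (α * ((n:ℝ)+1) - 1) / Real.Gamma (α * ((n:ℝ)+1))‖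
          ≤ ξ ^ (α-1) * (|B| * ((|B| * t ^ α) ^ n / Real.Gamma (α * n + α))) := by
        intro n
        rw [Real.norm_eq_abs, ML.abs_deriv_term hα0 B ξ hξ0 n]
        have hΓpos : 0 < Real.Gamma (α * (n:ℝ) + α) := Real.Gamma_pos_of_pos (by positivity)
        have hle : (|B| * ξ ^ α) ^ n ≤ (|B| * t ^ α) ^ n := by
          apply pow_le_pow_left₀ (by positivity)
          exact mul_le_mul_of_nonneg_left
            (Real.rpow_le_rpow hξ0.le hξ.2 hα0.le) (abs_nonneg B)
        have hdiv : (|B| * ξ ^ α) ^ n / Real.Gamma (α * n + α)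
            ≤ (|B| * t ^ α) ^ n / Real.Gamma (α * n + α) :=
          div_le_div_of_nonneg_right hle hΓpos.le
        calc |B| * ξ ^ (α-1) * ((|B| * ξ ^ α) ^ n / Real.Gamma (α * n + α))
            = ξ ^ (α-1) * (|B| * ((|B| * ξ ^ α) ^ n / Real.Gamma (α * n + α))) := by ring
          _ ≤ ξ ^ (α-1) * (|B| * ((|B| * t ^ α) ^ n / Real.Gamma (α * n + α))) := by
            apply mul_le_mul_of_nonneg_left
              (mul_le_mul_of_nonneg_left hdiv (abs_nonneg B))
              (Real.rpow_nonneg hξ0.le _)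
      calc (∑' n : ℕ, ‖(-B) ^ (n+1) * ξ ^ (α * ((n:ℝ)+1) - 1) / Real.Gamma (α * ((n:ℝ)+1))‖)
          ≤ ∑' n : ℕ, ξ ^ (α-1) * (|B| * ((|B| * t ^ α) ^ n / Real.Gamma (α * n + α))) :=
            Summable.tsum_le_tsum h2 hterm ((hKsum.mul_left |B|).mul_left (ξ ^ (α-1)))
        _ = ξ ^ (α-1) * K := by rw [tsum_mul_left, tsum_mul_left, hK]
    calc (t-ξ) ^ (-α) * |ML.mlDeriv α B ξ| ≤ (t-ξ) ^ (-α) * (ξ ^ (α-1) * K) :=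
          mul_le_mul_of_nonneg_left habs (Real.rpow_nonneg htξ _)
      _ = K * ((t-ξ) ^ (-α) * ξ ^ (α-1)) := by ring
  have hK0 : 0 ≤ K := by
    apply mul_nonneg (abs_nonneg B)
    exact tsum_nonneg (fun n => div_nonneg (by positivity)
      (Real.Gamma_nonneg_of_nonneg (by positivity)))
  have hgint : IntegrableOn (fun ξ : ℝ => K * ((t-ξ) ^ (-α) * ξ ^ (α-1)))
      (Set.Ioc 0 t) volume := by
    have h := (ML.beta_integrable hα1 ht hα0).const_mul K
    rwa [intervalIntegrable_iff, Set.uIoc_of_le ht.le] at h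
  have hmeas : AEStronglyMeasurable (fun ξ : ℝ => (t-ξ) ^ (-α) * deriv y ξ)
      (volume.restrict (Set.Ioc (0:ℝ) t)) := by
    have hm1 : AEStronglyMeasurable (fun ξ : ℝ => (t-ξ) ^ (-α))
        (volume.restrict (Set.Ioc (0:ℝ) t)) := by
      rw [← Measure.restrict_congr_set Ioo_ae_eq_Ioc]
      apply ContinuousOn.aestronglyMeasurable ?_ measurableSet_Ioo
      intro ξ hξ
      have : t - ξ ≠ 0 := by have := hξ.2; intro h; simp only [Set.mem_Ioo] at hξ; linarith
      exact (ContinuousAt.comp (Real.continuousAt_rpow_const _ _ (Or.inl this))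
        ((continuous_const.sub continuous_id).continuousAt)).continuousWithinAt
    exact hm1.mul (measurable_deriv y).aestronglyMeasurable
  have hii : IntegrableOn (fun ξ : ℝ => (t-ξ) ^ (-α) * deriv y ξ) (Set.Ioc 0 t) volume :=
    Integrable.mono' hgint hmeas ((ae_restrict_iff' measurableSet_Ioc).mpr (ae_of_all _ hbound))
  refine ⟨?_, hcap, ?_⟩
  · rw [intervalIntegrable_iff, Set.uIoc_of_le ht.le]
    exact hii
  · rw [hcap, hy t]
    ring
end

section
/- Let 0 < α < 1, B > 0 and let m be a positive integer with mα > 1. Then the function z(t) = ∑_{n=m+1}^∞ (−B)^n t^{αn} / Γ(αn + 1) satisfies z(0) = 0 and, for every t > 0, the Caputo derivative of order α of z exists and D^α z(t) + B z(t) = (−B)^{m+1} t^{αm} / Γ(αm + 1). -/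
open Real Filter MeasureTheory intervalIntegral Set

lemma gautschi {α : ℝ} (hα0 : 0 < α) (hα1 : α < 1) {x : ℝ} (hx : 0 < x) :
    x * Real.Gamma x / (x + α) ^ (1 - α) ≤ Real.Gamma (x + α) := by
  have h1 : Real.Gamma (α * (x + α) + (1 - α) * (x + 1 + α))
      ≤ Real.Gamma (x + α) ^ α * Real.Gamma (x + 1 + α) ^ (1 - α) :=
    Real.Gamma_mul_add_mul_le_rpow_Gamma_mul_rpow_Gamma (by linarith) (by linarith)
      hα0 (by linarith) (by ring)
  have hxα : (0:ℝ) < x + α := by linarith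
  have he : α * (x + α) + (1 - α) * (x + 1 + α) = x + 1 := by ring
  rw [he] at h1
  have h2 : Real.Gamma (x + 1 + α) = (x + α) * Real.Gamma (x + α) := by
    have := Real.Gamma_add_one (ne_of_gt hxα)
    rw [show x + 1 + α = (x + α) + 1 by ring, this]
  rw [Real.Gamma_add_one (ne_of_gt hx), h2] at h1
  have hΓ : 0 < Real.Gamma (x + α) := Real.Gamma_pos_of_pos hxα
  have h3 : Real.Gamma (x + α) ^ α * ((x + α) * Real.Gamma (x + α)) ^ (1 - α)
      = Real.Gamma (x + α) * (x + α) ^ (1 - α) := by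
    rw [Real.mul_rpow hxα.le hΓ.le,
      show Real.Gamma (x+α) ^ α * ((x+α) ^ (1-α) * Real.Gamma (x+α) ^ (1-α))
        = (Real.Gamma (x+α) ^ α * Real.Gamma (x+α) ^ (1-α)) * (x+α) ^ (1-α) by ring,
      ← Real.rpow_add hΓ]
    norm_num
  rw [h3] at h1
  rw [div_le_iff₀ (Real.rpow_pos_of_pos hxα _)]
  linarith

lemma summable_aux {α : ℝ} (hα0 : 0 < α) (hα1 : α < 1) (C : ℝ) {d : ℝ} (hd : 0 < d) :
    Summable (fun n : ℕ => C ^ n / Real.Gamma (α * n + d)) := by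
  apply summable_of_ratio_norm_eventually_le (r := 1/2) (by norm_num)
  have htend : Tendsto (fun n : ℕ => α * n + d) atTop atTop := by
    apply Tendsto.atTop_add _ tendsto_const_nhds
    exact Tendsto.const_mul_atTop hα0 tendsto_natCast_atTop_atTop
  have hev : ∀ᶠ n : ℕ in atTop, max 2 ((4 * |C| + 4) ^ (1/α)) ≤ α * n + d :=
    htend.eventually_ge_atTop _
  filter_upwards [hev] with n hn
  set x := α * n + d with hxdef
  have hx2 : (2:ℝ) ≤ x := le_trans (le_max_left _ _) hn
  have hx0 : (0:ℝ) < x := by linarith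
  have hxC : (4 * |C| + 4) ^ (1/α) ≤ x := le_trans (le_max_right _ _) hn
  have hΓx : 0 < Real.Gamma x := Real.Gamma_pos_of_pos hx0
  have hΓxa : 0 < Real.Gamma (x + α) := Real.Gamma_pos_of_pos (by linarith)
  have hkey : 2 * |C| * Real.Gamma x ≤ Real.Gamma (x + α) := by
    have hg := gautschi hα0 hα1 hx0
    have hxα4 : 4 * |C| + 4 ≤ x ^ α := by
      have h0 : (0:ℝ) < 4 * |C| + 4 := by positivity
      calc 4 * |C| + 4 = ((4 * |C| + 4) ^ (1/α)) ^ α := by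
            rw [← Real.rpow_mul h0.le, one_div, inv_mul_cancel₀ (ne_of_gt hα0), Real.rpow_one]
        _ ≤ x ^ α := Real.rpow_le_rpow (Real.rpow_nonneg h0.le _) hxC hα0.le
    have hxa0 : (0:ℝ) < x ^ α := Real.rpow_pos_of_pos hx0 _
    have hD : (x + α) ^ (1 - α) ≤ 2 * x / x ^ α := by
      have hb : (x + α) ^ (1 - α) ≤ (2 * x) ^ (1 - α) :=
        Real.rpow_le_rpow (by linarith) (by linarith) (by linarith)
      have hb2 : (2 * x) ^ (1 - α) = 2 ^ (1 - α) * x ^ (1 - α) :=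
        Real.mul_rpow (by norm_num) hx0.le
      have hb3 : (2:ℝ) ^ (1 - α) ≤ 2 := by
        calc (2:ℝ) ^ (1 - α) ≤ 2 ^ (1:ℝ) :=
          Real.rpow_le_rpow_of_exponent_le (by norm_num) (by linarith)
        _ = 2 := Real.rpow_one 2
      have hb4 : x ^ (1 - α) = x / x ^ α := by
        rw [eq_div_iff (ne_of_gt hxa0), ← Real.rpow_add hx0, sub_add_cancel, Real.rpow_one]
      have hb5 : 0 ≤ x ^ (1 - α) := Real.rpow_nonneg hx0.le _
      calc (x + α) ^ (1 - α) ≤ 2 ^ (1 - α) * x ^ (1 - α) := by rw [← hb2]; exact hb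
        _ ≤ 2 * x ^ (1 - α) := mul_le_mul_of_nonneg_right hb3 hb5
        _ = 2 * x / x ^ α := by rw [hb4]; ring
    have hD0 : (0:ℝ) < 2 * x / x ^ α := by positivity
    have h5 : x * Real.Gamma x / (2 * x / x ^ α) ≤ x * Real.Gamma x / (x + α) ^ (1 - α) :=
      div_le_div_of_nonneg_left (by positivity) (Real.rpow_pos_of_pos (by linarith) _) hD
    have h6 : x * Real.Gamma x / (2 * x / x ^ α) = x ^ α * Real.Gamma x / 2 := by
      field_simp
    nlinarith [mul_le_mul_of_nonneg_right hxα4 hΓx.le]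
  have hΓeq : Real.Gamma (α * (↑(n+1) : ℝ) + d) = Real.Gamma (x + α) := by
    congr 1; push_cast; ring
  rw [norm_div, norm_div, norm_pow, norm_pow, Real.norm_eq_abs, Real.norm_eq_abs,
    Real.norm_eq_abs, hΓeq, abs_of_pos hΓxa, abs_of_pos hΓx, pow_succ,
    div_le_iff₀ hΓxa]
  rw [show (1:ℝ)/2 * (|C|^n / Real.Gamma x) * Real.Gamma (x+α)
      = (1/2 * |C|^n * Real.Gamma (x+α))/Real.Gamma x from by ring, le_div_iff₀ hΓx]
  nlinarith [mul_le_mul_of_nonneg_left hkey (pow_nonneg (abs_nonneg C) n), pow_nonneg (abs_nonneg C) n]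

lemma realBeta {u v : ℝ} (hu : 0 < u) (hv : 0 < v) :
    ∫ x in (0:ℝ)..1, x ^ (u-1) * (1-x) ^ (v-1)
      = Real.Gamma u * Real.Gamma v / Real.Gamma (u+v) := by
  have h := Complex.Gamma_mul_Gamma_eq_betaIntegral (s := (u:ℂ)) (t := (v:ℂ))
    (by simpa using hu) (by simpa using hv)
  have hβ : Complex.betaIntegral u v
      = ((∫ x in (0:ℝ)..1, x ^ (u-1) * (1-x) ^ (v-1) : ℝ) : ℂ) := by
    rw [Complex.betaIntegral]
    rw [intervalIntegral.integral_congr (g := fun x : ℝ =>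
      ((x ^ (u-1) * (1-x) ^ (v-1) : ℝ) : ℂ)) ?_]
    · exact intervalIntegral.integral_ofReal
    · intro x hx
      rw [Set.uIcc_of_le (by norm_num : (0:ℝ) ≤ 1)] at hx
      have hx0 : (0:ℝ) ≤ x := hx.1
      have hx1 : (0:ℝ) ≤ 1 - x := by linarith [hx.2]
      show (x:ℂ) ^ ((u:ℂ) - 1) * (1 - (x:ℂ)) ^ ((v:ℂ) - 1)
        = ((x ^ (u-1) * (1-x) ^ (v-1) : ℝ) : ℂ)
      rw [Complex.ofReal_mul, Complex.ofReal_cpow hx0, Complex.ofReal_cpow hx1]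
      push_cast
      ring
  rw [hβ, ← Complex.ofReal_add, Complex.Gamma_ofReal, Complex.Gamma_ofReal,
    Complex.Gamma_ofReal, ← Complex.ofReal_mul, ← Complex.ofReal_mul] at h
  have h' := Complex.ofReal_inj.mp h
  have hΓ : Real.Gamma (u+v) ≠ 0 := ne_of_gt (Real.Gamma_pos_of_pos (by linarith))
  field_simp
  linarith [h']

lemma realBeta_scaled {u v t : ℝ} (hu : 0 < u) (hv : 0 < v) (ht : 0 < t) :
    ∫ ξ in (0:ℝ)..t, ξ ^ (u-1) * (t-ξ) ^ (v-1)
      = t ^ (u+v-1) * (Real.Gamma u * Real.Gamma v / Real.Gamma (u+v)) := by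
  have h1 := intervalIntegral.integral_comp_mul_left
    (f := fun ξ => ξ ^ (u-1) * (t-ξ) ^ (v-1)) (a := (0:ℝ)) (b := 1) (ne_of_gt ht)
  rw [mul_zero, mul_one] at h1
  have h2 : ∫ x in (0:ℝ)..1, (t * x) ^ (u-1) * (t - t * x) ^ (v-1)
      = (t ^ (u-1) * t ^ (v-1)) * ∫ x in (0:ℝ)..1, x ^ (u-1) * (1-x) ^ (v-1) := by
    rw [← intervalIntegral.integral_const_mul]
    apply intervalIntegral.integral_congr
    intro x hx
    rw [Set.uIcc_of_le (by norm_num : (0:ℝ) ≤ 1)] at hx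
    have hx0 : (0:ℝ) ≤ x := hx.1
    have hx1 : (0:ℝ) ≤ 1 - x := by linarith [hx.2]
    show (t * x) ^ (u-1) * (t - t * x) ^ (v-1)
      = t ^ (u-1) * t ^ (v-1) * (x ^ (u-1) * (1-x) ^ (v-1))
    rw [Real.mul_rpow ht.le hx0, show t - t * x = t * (1 - x) by ring,
      Real.mul_rpow ht.le hx1]
    ring
  rw [h2, realBeta hu hv] at h1
  have h3 : t ^ (u+v-1) = t * (t ^ (u-1) * t ^ (v-1)) := by
    calc t ^ (u+v-1) = t ^ ((u-1) + (v-1) + 1) := by rw [show u+v-1 = (u-1)+(v-1)+1 by ring]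
      _ = t ^ ((u-1)+(v-1)) * t ^ (1:ℝ) := Real.rpow_add ht _ _
      _ = t * (t ^ (u-1) * t ^ (v-1)) := by rw [Real.rpow_add ht, Real.rpow_one]; ring
  rw [smul_eq_mul] at h1
  rw [h3]
  field_simp at h1 ⊢
  linarith [h1]

lemma summable_bound_aux {α : ℝ} (hα0 : 0 < α) (hα1 : α < 1) {d : ℝ} (hd : 0 < d)
    (K C : ℝ) (f : ℕ → ℝ)
    (hf : ∀ n, ‖f n‖ ≤ K * C ^ n / Real.Gamma (α * n + d)) : Summable f := by
  apply Summable.of_norm_bounded ?_ hf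
  have := (summable_aux hα0 hα1 C hd).mul_left K
  simpa [mul_div_assoc] using this

lemma meas_rpow_shift (t c : ℝ) : Measurable fun ξ : ℝ => (t-ξ) ^ c := by
  have h : Measurable fun ξ : ℝ => t - ξ := measurable_const.sub measurable_id
  measurability

lemma rpow_shift {T α : ℝ} (hT : 0 < T) (e c : ℝ) (n : ℕ) (h : e = α * n + c) :
    T ^ e = T ^ c * (T ^ α) ^ n := by
  rw [h, Real.rpow_add hT, ← Real.rpow_natCast (T ^ α) n, ← Real.rpow_mul hT.le]
  exact mul_comm _ _



/-- The tail `z(t) = ∑_{n=m+1}^∞ (−B)^n t^{αn}/Γ(αn+1)` of `E_α(−B t^α)` satisfies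
`z(0) = 0` and, for every `t > 0`, the Caputo derivative of order `α` of `z` exists and
`D^α z(t) + B z(t) = (−B)^{m+1} t^{αm}/Γ(αm+1)`. -/
theorem tail_solves_two_term_equation (α B : ℝ) (m : ℕ)
    (hα0 : 0 < α) (hα1 : α < 1) (hB : 0 < B) (hm : 0 < m) (hmα : 1 < m * α)
    (z : ℝ → ℝ)
    (hz : ∀ t : ℝ, z t = ∑' n : ℕ,
      (-B) ^ (m + 1 + n) * t ^ (α * ((m : ℝ) + 1 + n)) /
        Real.Gamma (α * ((m : ℝ) + 1 + n) + 1)) :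
    z 0 = 0 ∧
    ∀ t : ℝ, 0 < t →
      IntervalIntegrable (fun ξ => (t - ξ) ^ (-α) * deriv z ξ)
        MeasureTheory.volume 0 t ∧
      caputoDeriv α z t + B * z t =
        (-B) ^ (m + 1) * t ^ (α * m) / Real.Gamma (α * m + 1) := by
  have hmR : (1:ℝ) < (m:ℝ) * α := hmα
  set β : ℕ → ℝ := fun n => α * ((m:ℝ) + 1 + n) with hβdef
  set A : ℕ → ℝ := fun n => (-B) ^ (m + 1 + n) / Real.Gamma (β n + 1) with hAdef
  have hd0 : 1 < α * ((m:ℝ) + 1) := by nlinarith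
  have hβ : ∀ n : ℕ, β n = α * n + α * ((m:ℝ)+1) := by
    intro n; simp only [hβdef]; ring
  have hβ1 : ∀ n : ℕ, 1 < β n := by
    intro n; rw [hβ n]
    have : 0 ≤ α * n := by positivity
    linarith
  have hβpos : ∀ n : ℕ, 0 < β n := fun n => lt_trans one_pos (hβ1 n)
  have hΓβ1pos : ∀ n : ℕ, 0 < Real.Gamma (β n + 1) :=
    fun n => Real.Gamma_pos_of_pos (by linarith [hβpos n])
  have hΓβpos : ∀ n : ℕ, 0 < Real.Gamma (β n) :=
    fun n => Real.Gamma_pos_of_pos (hβpos n)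
  have hΓ1α : 0 < Real.Gamma (1-α) := Real.Gamma_pos_of_pos (by linarith)
  have hAabs : ∀ n : ℕ, |A n| = B ^ (m+1+n) / Real.Gamma (β n + 1) := by
    intro n
    rw [hAdef]
    rw [abs_div, abs_pow, abs_neg, abs_of_pos hB, abs_of_pos (hΓβ1pos n)]
  have hzg : z = fun y => ∑' n, A n * y ^ β n := by
    funext y
    rw [hz y]
    exact tsum_congr fun n => mul_div_right_comm _ _ _
  -- norm of terms of z-series
  have hgbound : ∀ ξ : ℝ, 0 < ξ → ∀ n : ℕ, ‖A n * ξ ^ β n‖ =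
      (B^(m+1) * ξ ^ (α * ((m:ℝ)+1))) * (B * ξ ^ α) ^ n
        / Real.Gamma (α * n + (α * ((m:ℝ)+1) + 1)) := by
    intro ξ hξ n
    have hΓa : Real.Gamma (β n + 1) = Real.Gamma (α * n + (α * ((m:ℝ)+1) + 1)) := by
      congr 1; rw [hβ n]; ring
    rw [norm_mul, Real.norm_eq_abs, Real.norm_eq_abs, hAabs n,
      abs_of_nonneg (Real.rpow_nonneg hξ.le _),
      rpow_shift hξ (β n) (α * ((m:ℝ)+1)) n (hβ n), hΓa, pow_add, mul_pow]
    ring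
  have hsum_g : ∀ ξ : ℝ, 0 < ξ → Summable (fun n => A n * ξ ^ β n) := by
    intro ξ hξ
    exact summable_bound_aux hα0 hα1 (d := α * ((m:ℝ)+1) + 1) (by linarith)
      _ _ _ (fun n => le_of_eq (hgbound ξ hξ n))
  -- bound for derivative terms
  have hg'norm : ∀ (T ξ : ℝ), 0 < ξ → ξ ≤ T → ∀ n : ℕ,
      ‖A n * (β n * ξ ^ (β n - 1))‖ ≤ |A n| * (β n * T ^ (β n - 1)) := by
    intro T ξ hξ hξT n
    rw [norm_mul, Real.norm_eq_abs, Real.norm_eq_abs,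
      abs_of_nonneg (by positivity : (0:ℝ) ≤ β n * ξ ^ (β n - 1))]
    have : ξ ^ (β n - 1) ≤ T ^ (β n - 1) :=
      Real.rpow_le_rpow hξ.le hξT (by linarith [hβ1 n])
    have h2 : β n * ξ ^ (β n - 1) ≤ β n * T ^ (β n - 1) :=
      mul_le_mul_of_nonneg_left this (hβpos n).le
    exact mul_le_mul_of_nonneg_left h2 (abs_nonneg _)
  have hu_eq : ∀ T : ℝ, 0 < T → ∀ n : ℕ, |A n| * (β n * T ^ (β n - 1)) =
      (B^(m+1) * T ^ (α * ((m:ℝ)+1) - 1)) * (B * T ^ α) ^ n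
        / Real.Gamma (α * n + α * ((m:ℝ)+1)) := by
    intro T hT n
    have hΓa : Real.Gamma (β n + 1) = β n * Real.Gamma (β n) :=
      Real.Gamma_add_one (ne_of_gt (hβpos n))
    have hΓb : Real.Gamma (β n) = Real.Gamma (α * n + α * ((m:ℝ)+1)) := by
      congr 1; exact hβ n
    rw [hAabs n, hΓa, rpow_shift hT (β n - 1) (α * ((m:ℝ)+1) - 1) n
      (by rw [hβ n]; ring), ← hΓb, pow_add, mul_pow]
    field_simp
    ring_nf
    simp [(hβpos n).ne']
  have husum : ∀ T : ℝ, 0 < T →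
      Summable (fun n => |A n| * (β n * T ^ (β n - 1))) := by
    intro T hT
    apply summable_bound_aux hα0 hα1 (d := α * ((m:ℝ)+1)) (by linarith) _ _ _
    intro n
    rw [Real.norm_eq_abs, abs_of_nonneg (by positivity)]
    exact le_of_eq (hu_eq T hT n)
  -- derivative of z
  have hDeriv : ∀ ξ : ℝ, 0 < ξ →
      HasDerivAt z (∑' n, A n * (β n * ξ ^ (β n - 1))) ξ := by
    intro ξ hξ
    rw [hzg]
    exact hasDerivAt_tsum_of_isPreconnected (husum (ξ+1) (by linarith)) isOpen_Ioo
      (convex_Ioo (0:ℝ) (ξ+1)).isPreconnected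
      (fun n y hy =>
        (Real.hasDerivAt_rpow_const (p := β n) (Or.inl (ne_of_gt hy.1))).const_mul (A n))
      (fun n y hy => hg'norm (ξ+1) y hy.1 hy.2.le n)
      (show ξ ∈ Set.Ioo (0:ℝ) (ξ+1) from ⟨hξ, by linarith⟩)
      (hsum_g ξ hξ) ⟨hξ, by linarith⟩
  have hDerivEq : ∀ ξ : ℝ, 0 < ξ →
      deriv z ξ = ∑' n, A n * (β n * ξ ^ (β n - 1)) :=
    fun ξ hξ => (hDeriv ξ hξ).deriv
  constructor
  · rw [hz 0]
    have h0 : ∀ n : ℕ, (-B) ^ (m + 1 + n) * (0:ℝ) ^ (α * ((m:ℝ) + 1 + n)) /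
        Real.Gamma (α * ((m:ℝ) + 1 + n) + 1) = 0 := by
      intro n
      rw [Real.zero_rpow (ne_of_gt (by positivity))]
      simp
    rw [tsum_congr h0, tsum_zero]
  intro t ht
  -- integrability of the weight
  have hrpow_int : IntervalIntegrable (fun ξ => (t-ξ) ^ (-α)) volume 0 t := by
    have h := (intervalIntegral.intervalIntegrable_rpow' (a := t) (b := 0) (r := -α)
      (by linarith)).comp_sub_left t
    simpa using h
  have hIntOn_rpow : IntegrableOn (fun ξ => (t-ξ) ^ (-α)) (Set.Ioc 0 t) volume :=
    (intervalIntegrable_iff_integrableOn_Ioc_of_le ht.le).mp hrpow_int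
  have hq_int : ∀ n : ℕ,
      IntervalIntegrable (fun ξ => ξ ^ (β n - 1) * (t-ξ) ^ (-α)) volume 0 t := by
    intro n
    apply IntervalIntegrable.continuousOn_mul hrpow_int
    apply Continuous.continuousOn
    exact continuous_iff_continuousAt.mpr fun x =>
      Real.continuousAt_rpow_const x _ (Or.inr (by linarith [hβ1 n]))
  have hq_nonneg : ∀ n : ℕ, ∀ ξ ∈ Set.Ioc (0:ℝ) t,
      0 ≤ ξ ^ (β n - 1) * (t-ξ) ^ (-α) := by
    intro n ξ hξ
    exact mul_nonneg (Real.rpow_nonneg hξ.1.le _)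
      (Real.rpow_nonneg (by linarith [hξ.2]) _)
  have hq_J : ∀ n : ℕ, ∫ ξ in (0:ℝ)..t, ξ ^ (β n - 1) * (t-ξ) ^ (-α)
      = t ^ (β n - α) * (Real.Gamma (β n) * Real.Gamma (1-α)
          / Real.Gamma (β n + 1 - α)) := by
    intro n
    have h := realBeta_scaled (u := β n) (v := 1-α) (hβpos n) (by linarith) ht
    rw [show β n + (1-α) - 1 = β n - α by ring] at h
    rw [show β n + (1-α) = β n + 1 - α by ring] at h
    rw [← h]
    apply intervalIntegral.integral_congr
    intro x hx
    rw [show (1:ℝ)-α-1 = -α by ring]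
  have hq_intOn : ∀ n : ℕ,
      IntegrableOn (fun ξ => ξ ^ (β n - 1) * (t-ξ) ^ (-α)) (Set.Ioc 0 t) volume :=
    fun n => (intervalIntegrable_iff_integrableOn_Ioc_of_le ht.le).mp (hq_int n)
  -- the summand functions
  set F : ℕ → ℝ → ℝ := fun n ξ => (A n * β n) * (ξ ^ (β n - 1) * (t-ξ) ^ (-α))
    with hFdef
  have hF_intOn : ∀ n : ℕ, IntegrableOn (F n) (Set.Ioc 0 t) volume :=
    fun n => (hq_intOn n).const_mul _
  have hF_int : ∀ n : ℕ, ∫ ξ in Set.Ioc (0:ℝ) t, F n ξ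
      = (A n * β n) * (t ^ (β n - α) * (Real.Gamma (β n) * Real.Gamma (1-α)
          / Real.Gamma (β n + 1 - α))) := by
    intro n
    rw [hFdef]
    rw [MeasureTheory.integral_const_mul]
    rw [← intervalIntegral.integral_of_le ht.le, hq_J n]
  -- |A n| β n Γ(β n) = B^(m+1+n), signed version too
  have hABG : ∀ n : ℕ, |A n| * β n * Real.Gamma (β n) = B ^ (m+1+n) := by
    intro n
    rw [hAabs n, Real.Gamma_add_one (ne_of_gt (hβpos n))]
    field_simp
    ring_nf
    field_simp [(hβpos n).ne', (hΓβpos n).ne']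
  have hABG' : ∀ n : ℕ, A n * β n * Real.Gamma (β n) = (-B) ^ (m+1+n) := by
    intro n
    rw [hAdef]
    simp only
    rw [Real.Gamma_add_one (ne_of_gt (hβpos n))]
    field_simp
    ring_nf
    field_simp [(hβpos n).ne', (hΓβpos n).ne']
  -- the per-term integral norms are summable
  have hw_eq : ∀ n : ℕ, |A n| * β n * (t ^ (β n - α) * (Real.Gamma (β n)
        * Real.Gamma (1-α) / Real.Gamma (β n + 1 - α)))
      = (B^(m+1) * t ^ (α * (m:ℝ)) * Real.Gamma (1-α)) * (B * t ^ α) ^ n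
          / Real.Gamma (α * n + (α * (m:ℝ) + 1)) := by
    intro n
    have hΓc : Real.Gamma (β n + 1 - α) = Real.Gamma (α * n + (α * (m:ℝ) + 1)) := by
      congr 1; rw [hβ n]; ring
    have htp := rpow_shift ht (β n - α) (α * (m:ℝ)) n (by rw [hβ n]; ring)
    rw [hΓc]
    rw [show |A n| * β n * (t ^ (β n - α) * (Real.Gamma (β n) * Real.Gamma (1-α)
        / Real.Gamma (α * n + (α * (m:ℝ) + 1))))
      = (|A n| * β n * Real.Gamma (β n)) * (t ^ (β n - α) * Real.Gamma (1-α))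
        / Real.Gamma (α * n + (α * (m:ℝ) + 1)) from by ring]
    rw [hABG n, htp, pow_add, mul_pow]
    ring
  have hΓβα : ∀ n : ℕ, 0 < Real.Gamma (β n + 1 - α) :=
    fun n => Real.Gamma_pos_of_pos (by linarith [hβ1 n])
  have hw_nonneg : ∀ n : ℕ, 0 ≤ |A n| * β n * (t ^ (β n - α) * (Real.Gamma (β n)
      * Real.Gamma (1-α) / Real.Gamma (β n + 1 - α))) := by
    intro n
    apply mul_nonneg (mul_nonneg (abs_nonneg _) (hβpos n).le)
    apply mul_nonneg (Real.rpow_nonneg ht.le _)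
    exact div_nonneg (mul_nonneg (hΓβpos n).le hΓ1α.le) (hΓβα n).le
  have hw_sum : Summable (fun n : ℕ => |A n| * β n * (t ^ (β n - α)
      * (Real.Gamma (β n) * Real.Gamma (1-α) / Real.Gamma (β n + 1 - α)))) := by
    apply summable_bound_aux hα0 hα1 (d := α * (m:ℝ) + 1) (by positivity)
      (B^(m+1) * t ^ (α * (m:ℝ)) * Real.Gamma (1-α)) (B * t ^ α)
    intro n
    rw [Real.norm_eq_abs, abs_of_nonneg (hw_nonneg n)]
    exact le_of_eq (hw_eq n)
  have hFnorm : ∀ n : ℕ, (∫⁻ ξ in Set.Ioc (0:ℝ) t, ‖F n ξ‖₊)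
      = ENNReal.ofReal (|A n| * β n * (t ^ (β n - α) * (Real.Gamma (β n)
          * Real.Gamma (1-α) / Real.Gamma (β n + 1 - α)))) := by
    intro n
    erw [← MeasureTheory.ofReal_integral_norm_eq_lintegral_enorm (hF_intOn n)]
    congr 1
    have h1 : ∫ ξ in Set.Ioc (0:ℝ) t, ‖F n ξ‖
        = ∫ ξ in Set.Ioc (0:ℝ) t, |A n| * β n * (ξ ^ (β n - 1) * (t-ξ) ^ (-α)) := by
      apply MeasureTheory.setIntegral_congr_fun measurableSet_Ioc
      intro ξ hξ
      rw [hFdef]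
      simp only
      rw [Real.norm_eq_abs, abs_mul, abs_mul, abs_of_pos (hβpos n),
        abs_of_nonneg (hq_nonneg n ξ hξ)]
    rw [h1, MeasureTheory.integral_const_mul, ← intervalIntegral.integral_of_le ht.le,
      hq_J n]
  have hmeasF : ∀ n : ℕ, AEStronglyMeasurable (F n) (volume.restrict (Set.Ioc 0 t)) :=
    fun n => (hF_intOn n).aestronglyMeasurable
  have hlint : ∑' n : ℕ, (∫⁻ ξ in Set.Ioc (0:ℝ) t, ‖F n ξ‖₊) ≠ ⊤ := by
    rw [tsum_congr hFnorm, ← ENNReal.ofReal_tsum_of_nonneg hw_nonneg hw_sum]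
    exact ENNReal.ofReal_ne_top
  have hswap : (∫ ξ in Set.Ioc (0:ℝ) t, ∑' n : ℕ, F n ξ)
      = ∑' n : ℕ, ∫ ξ in Set.Ioc (0:ℝ) t, F n ξ :=
    MeasureTheory.integral_tsum hmeasF hlint
  have hEqOn : Set.EqOn (fun ξ => (t-ξ) ^ (-α) * deriv z ξ)
      (fun ξ => ∑' n : ℕ, F n ξ) (Set.Ioc 0 t) := by
    intro ξ hξ
    simp only
    rw [hDerivEq ξ hξ.1, ← tsum_mul_left]
    exact tsum_congr fun n => by rw [hFdef]; ring
  -- part 1: interval integrability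
  have hMsum := husum t ht
  have hDbound : ∀ ξ ∈ Set.Ioc (0:ℝ) t,
      ‖deriv z ξ‖ ≤ ∑' n : ℕ, |A n| * (β n * t ^ (β n - 1)) := by
    intro ξ hξ
    rw [hDerivEq ξ hξ.1]
    have hS : Summable (fun n : ℕ => ‖A n * (β n * ξ ^ (β n - 1))‖) :=
      Summable.of_nonneg_of_le (fun n => norm_nonneg _)
        (fun n => hg'norm t ξ hξ.1 hξ.2 n) hMsum
    exact (norm_tsum_le_tsum_norm hS).trans
      (Summable.tsum_le_tsum (fun n => hg'norm t ξ hξ.1 hξ.2 n) hS hMsum)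
  have hIntOn : IntegrableOn (fun ξ => (t-ξ) ^ (-α) * deriv z ξ)
      (Set.Ioc 0 t) volume := by
    apply MeasureTheory.Integrable.mono'
      (hIntOn_rpow.const_mul (∑' n : ℕ, |A n| * (β n * t ^ (β n - 1))))
    · apply Measurable.aestronglyMeasurable
      exact (meas_rpow_shift t (-α)).mul (measurable_deriv z)
    · rw [MeasureTheory.ae_restrict_iff' measurableSet_Ioc]
      filter_upwards with ξ
      intro hξ
      have h0 : (0:ℝ) ≤ (t-ξ) ^ (-α) := Real.rpow_nonneg (by linarith [hξ.2]) _
      rw [norm_mul, Real.norm_eq_abs, abs_of_nonneg h0]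
      calc (t-ξ) ^ (-α) * ‖deriv z ξ‖
          ≤ (t-ξ) ^ (-α) * (∑' n : ℕ, |A n| * (β n * t ^ (β n - 1))) :=
            mul_le_mul_of_nonneg_left (hDbound ξ hξ) h0
        _ = (∑' n : ℕ, |A n| * (β n * t ^ (β n - 1))) * (t-ξ) ^ (-α) := mul_comm _ _
  refine ⟨(intervalIntegrable_iff_integrableOn_Ioc_of_le ht.le).mpr hIntOn, ?_⟩
  -- the value of the integral
  have hIntEq : (∫ ξ in (0:ℝ)..t, (t-ξ) ^ (-α) * deriv z ξ)
      = ∑' n : ℕ, A n * β n * (t ^ (β n - α) * (Real.Gamma (β n)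
          * Real.Gamma (1-α) / Real.Gamma (β n + 1 - α))) := by
    rw [intervalIntegral.integral_of_le ht.le,
      MeasureTheory.setIntegral_congr_fun measurableSet_Ioc hEqOn, hswap]
    exact tsum_congr hF_int
  have hcap : caputoDeriv α z t = ∑' n : ℕ,
      (-B) ^ (m+1+n) * t ^ (α * ((m:ℝ) + n)) / Real.Gamma (α * ((m:ℝ) + n) + 1) := by
    simp only [caputoDeriv]
    rw [hIntEq, ← tsum_mul_left]
    apply tsum_congr
    intro n
    have e1 : β n - α = α * ((m:ℝ) + n) := by rw [hβ n]; ring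
    have e2 : Real.Gamma (β n + 1 - α) = Real.Gamma (α * ((m:ℝ) + n) + 1) := by
      congr 1; rw [hβ n]; ring
    rw [e2, ← e1]
    rw [show A n * β n * (t ^ (β n - α) * (Real.Gamma (β n) * Real.Gamma (1-α)
          / Real.Gamma (β n - α + 1)))
        = (A n * β n * Real.Gamma (β n)) * Real.Gamma (1-α) * t ^ (β n - α)
          / Real.Gamma (β n - α + 1) from by ring, hABG' n]
    have hΓE : Real.Gamma (β n - α + 1) ≠ 0 :=
      ne_of_gt (Real.Gamma_pos_of_pos (by linarith [hβ1 n]))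
    field_simp
  have hSsum : Summable (fun n : ℕ =>
      (-B) ^ (m+1+n) * t ^ (α * ((m:ℝ) + n)) / Real.Gamma (α * ((m:ℝ) + n) + 1)) := by
    apply summable_bound_aux hα0 hα1 (d := α * (m:ℝ) + 1) (by positivity)
      (B^(m+1) * t ^ (α * (m:ℝ))) (B * t ^ α)
    intro n
    apply le_of_eq
    have hΓp : (0:ℝ) < Real.Gamma (α * ((m:ℝ) + n) + 1) :=
      Real.Gamma_pos_of_pos (by positivity)
    rw [norm_div, norm_mul, norm_pow, Real.norm_eq_abs, Real.norm_eq_abs,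
      Real.norm_eq_abs, abs_neg, abs_of_pos hB,
      abs_of_nonneg (Real.rpow_nonneg ht.le _), abs_of_pos hΓp]
    rw [rpow_shift ht (α * ((m:ℝ) + n)) (α * (m:ℝ)) n (by ring), pow_add, mul_pow]
    rw [show α * ((m:ℝ) + n) + 1 = α * n + (α * (m:ℝ) + 1) from by ring]
    ring
  rw [hcap, Summable.tsum_eq_zero_add hSsum]
  have hf0 : (-B) ^ (m+1+0) * t ^ (α * ((m:ℝ) + (0:ℕ)))
      / Real.Gamma (α * ((m:ℝ) + (0:ℕ)) + 1)
      = (-B) ^ (m+1) * t ^ (α * m) / Real.Gamma (α * m + 1) := by norm_num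
  have htail : (∑' n : ℕ, (-B) ^ (m+1+(n+1)) * t ^ (α * ((m:ℝ) + ((n:ℕ)+1:ℕ)))
        / Real.Gamma (α * ((m:ℝ) + ((n:ℕ)+1:ℕ)) + 1)) = (-B) * z t := by
    rw [hz t, ← tsum_mul_left]
    apply tsum_congr
    intro n
    have hc : ((m:ℝ) + (((n:ℕ)+1:ℕ) : ℝ)) = (m:ℝ) + 1 + n := by push_cast; ring
    rw [hc, show m+1+(n+1) = (m+1+n)+1 from by ring, pow_succ]
    ring
  rw [hf0, htail]
  ring
end

section
/- For every 0 < α < 1 and every t > 0, ∫₀ᵗ ξ^{α−1} E_{α,α}(−ξ^α) E_α(−2 (t−ξ)^α) dξ = E_α(−t^α) − E_α(−2 t^α). -/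
/-- The two-parameter Mittag-Leffler function `E_{α,β}(x) = ∑_{n=0}^∞ xⁿ/Γ(αn+β)`. -/
noncomputable def mittagLeffler2 (α β x : ℝ) : ℝ :=
  ∑' n : ℕ, x ^ n / Real.Gamma (α * n + β)

open MeasureTheory


/-- Lower bound on Gamma ratio from log-convexity. -/
lemma gamma_ratio_lb {α s : ℝ} (hα0 : 0 < α) (hα1 : α ≤ 1) (hs : 1 ≤ s) :
    Real.Gamma s * (s + α - 1) ^ α ≤ Real.Gamma (s + α) := by
  have hs0 : 0 < s := lt_of_lt_of_le one_pos hs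
  have h1 : (0:ℝ) < s + α - 1 := by linarith
  have h2 : (0:ℝ) < s + α := by linarith
  have hconv := Real.convexOn_log_Gamma.2 (Set.mem_Ioi.mpr h1) (Set.mem_Ioi.mpr h2)
    (le_of_lt hα0) (by linarith : (0:ℝ) ≤ 1 - α) (by ring)
  have hcomb : α • (s + α - 1) + (1 - α) • (s + α) = s := by simp [smul_eq_mul]; ring
  rw [hcomb] at hconv
  simp only [Function.comp_apply, smul_eq_mul] at hconv
  have hGadd : Real.Gamma (s + α) = (s + α - 1) * Real.Gamma (s + α - 1) := by
    have := Real.Gamma_add_one (ne_of_gt h1)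
    rw [show s + α - 1 + 1 = s + α by ring] at this
    linarith [this]
  have hG1 : 0 < Real.Gamma (s + α - 1) := Real.Gamma_pos_of_pos h1
  have hG2 : 0 < Real.Gamma (s + α) := Real.Gamma_pos_of_pos h2
  have hGs : 0 < Real.Gamma s := Real.Gamma_pos_of_pos hs0
  have hlog : Real.log (Real.Gamma (s + α - 1)) =
      Real.log (Real.Gamma (s + α)) - Real.log (s + α - 1) := by
    rw [hGadd, Real.log_mul (ne_of_gt h1) (ne_of_gt hG1)]; ring
  rw [hlog] at hconv
  have key : Real.log (Real.Gamma s) + α * Real.log (s + α - 1) ≤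
      Real.log (Real.Gamma (s + α)) := by nlinarith
  calc Real.Gamma s * (s + α - 1) ^ α
      = Real.exp (Real.log (Real.Gamma s) + α * Real.log (s + α - 1)) := by
        rw [Real.exp_add, Real.exp_log hGs, Real.rpow_def_of_pos h1]; ring_nf
    _ ≤ Real.exp (Real.log (Real.Gamma (s + α))) := Real.exp_le_exp.mpr key
    _ = Real.Gamma (s + α) := Real.exp_log hG2

/-- Summability of Mittag-Leffler type series (in norm). -/
lemma ml_summable_norm {α c : ℝ} (hα0 : 0 < α) (hα1 : α ≤ 1) (hc : 0 < c) (x : ℝ) :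
    Summable (fun n : ℕ => |x| ^ n / Real.Gamma (α * n + c)) := by
  apply summable_of_ratio_norm_eventually_le (r := 1/2) (by norm_num)
  have hM : ∃ N : ℕ, ∀ n ≥ N, (1:ℝ) ≤ α * n + c ∧ (2 * |x|) ^ (1/α) ≤ α * n + c + α - 1 := by
    obtain ⟨N, hN⟩ := exists_nat_gt (max ((1 - c)/α) (((2*|x|)^(1/α) + 1 - c)/α))
    refine ⟨N, fun n hn => ?_⟩
    have hcast : (N:ℝ) ≤ n := by exact_mod_cast Nat.cast_le.mpr hn
    have h1 : ((1 - c)/α) < n := lt_of_le_of_lt (le_max_left _ _) (lt_of_lt_of_le hN hcast)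
    have h2 : (((2*|x|)^(1/α) + 1 - c)/α) < n := lt_of_le_of_lt (le_max_right _ _) (lt_of_lt_of_le hN hcast)
    rw [div_lt_iff₀ hα0] at h1 h2
    constructor <;> nlinarith
  obtain ⟨N, hN⟩ := hM
  rw [Filter.eventually_atTop]
  refine ⟨N, fun n hn => ?_⟩
  obtain ⟨h1, h2⟩ := hN n hn
  set s := α * n + c with hs
  have hspos : (0:ℝ) < s := lt_of_lt_of_le one_pos h1
  have hsa1 : (0:ℝ) < s + α - 1 := by linarith
  have hG : 0 < Real.Gamma s := Real.Gamma_pos_of_pos hspos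
  have hG2 : 0 < Real.Gamma (s + α) := Real.Gamma_pos_of_pos (by linarith)
  have hkey := gamma_ratio_lb hα0 hα1 h1
  have h2x : 2 * |x| ≤ (s + α - 1) ^ α := by
    rcases le_or_gt (2 * |x|) 0 with h | h
    · exact le_trans h (Real.rpow_nonneg hsa1.le α)
    · have := Real.rpow_le_rpow (Real.rpow_nonneg (by positivity) _) h2 hα0.le
      rwa [← Real.rpow_mul (by positivity), one_div,
        inv_mul_cancel₀ (ne_of_gt hα0), Real.rpow_one] at this
  have harg : α * ((n+1:ℕ):ℝ) + c = s + α := by push_cast; ring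
  rw [harg, Real.norm_of_nonneg (div_nonneg (by positivity) hG2.le),
    Real.norm_of_nonneg (div_nonneg (by positivity) hG.le)]
  rcases eq_or_lt_of_le (abs_nonneg x) with hx | hx
  · rw [← hx]; simp [pow_succ]; positivity
  · have h3 : 2 * |x| * Real.Gamma s ≤ Real.Gamma (s + α) := by nlinarith
    calc |x| ^ (n+1) / Real.Gamma (s + α)
        ≤ |x| ^ (n+1) / (2 * |x| * Real.Gamma s) := by
          apply div_le_div_of_nonneg_left (by positivity) (by positivity) h3
      _ = 1/2 * (|x| ^ n / Real.Gamma s) := by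
          rw [pow_succ]; field_simp

lemma ml_norm_eq {α c : ℝ} (hα0 : 0 < α) (hc : 0 < c) (x : ℝ) (n : ℕ) :
    ‖x ^ n / Real.Gamma (α * n + c)‖ = |x| ^ n / Real.Gamma (α * n + c) := by
  have hpos : 0 < Real.Gamma (α * n + c) :=
    Real.Gamma_pos_of_pos (add_pos_of_nonneg_of_pos (mul_nonneg hα0.le (Nat.cast_nonneg n)) hc)
  rw [Real.norm_eq_abs, abs_div, abs_pow, abs_of_pos hpos]

lemma ml_summable_norm' {α c : ℝ} (hα0 : 0 < α) (hα1 : α ≤ 1) (hc : 0 < c) (x : ℝ) :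
    Summable (fun n : ℕ => ‖x ^ n / Real.Gamma (α * n + c)‖) :=
  (ml_summable_norm hα0 hα1 hc x).congr (fun n => (ml_norm_eq hα0 hc x n).symm)

lemma ml_summable {α c : ℝ} (hα0 : 0 < α) (hα1 : α ≤ 1) (hc : 0 < c) (x : ℝ) :
    Summable (fun n : ℕ => x ^ n / Real.Gamma (α * n + c)) :=
  (ml_summable_norm' hα0 hα1 hc x).of_norm

/-- Real Beta integral. -/
lemma real_beta {a b : ℝ} (ha : 0 < a) (hb : 0 < b) :
    ∫ x in (0:ℝ)..1, x ^ (a - 1) * (1 - x) ^ (b - 1) =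
      Real.Gamma a * Real.Gamma b / Real.Gamma (a + b) := by
  have hc := Complex.Gamma_mul_Gamma_eq_betaIntegral
    (s := (a:ℂ)) (t := (b:ℂ)) (by simpa using ha) (by simpa using hb)
  have hβ : Complex.betaIntegral a b =
      ((∫ x in (0:ℝ)..1, x ^ (a - 1) * (1 - x) ^ (b - 1) : ℝ) : ℂ) := by
    rw [Complex.betaIntegral]
    rw [← intervalIntegral.integral_ofReal]
    apply intervalIntegral.integral_congr
    intro x hx
    rw [Set.uIcc_of_le (by norm_num : (0:ℝ) ≤ 1)] at hx
    obtain ⟨hx0, hx1⟩ := hx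
    dsimp only
    rw [show ((a:ℂ) - 1) = ((a - 1 : ℝ) : ℂ) by push_cast; ring,
      show ((b:ℂ) - 1) = ((b - 1 : ℝ) : ℂ) by push_cast; ring,
      show (1 - (x:ℂ)) = ((1 - x : ℝ) : ℂ) by push_cast; ring,
      ← Complex.ofReal_cpow hx0, ← Complex.ofReal_cpow (by linarith : (0:ℝ) ≤ 1 - x),
      ← Complex.ofReal_mul]
  rw [hβ] at hc
  have hG : Complex.Gamma ((a:ℂ) + b) = ((Real.Gamma (a+b) : ℝ) : ℂ) := by
    rw [← Complex.ofReal_add, Complex.Gamma_ofReal]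
  rw [Complex.Gamma_ofReal, Complex.Gamma_ofReal, hG] at hc
  have hGab : Real.Gamma (a + b) ≠ 0 := ne_of_gt (Real.Gamma_pos_of_pos (by linarith))
  field_simp
  have := hc.symm
  have h2 : Real.Gamma (a + b) * (∫ x in (0:ℝ)..1, x ^ (a - 1) * (1 - x) ^ (b - 1)) =
      Real.Gamma a * Real.Gamma b := by exact_mod_cast this
  linarith

lemma real_beta_scaled {a b t : ℝ} (ha : 0 < a) (hb : 0 < b) (ht : 0 < t) :
    ∫ ξ in (0:ℝ)..t, ξ ^ (a - 1) * (t - ξ) ^ (b - 1) =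
      t ^ (a + b - 1) * (Real.Gamma a * Real.Gamma b / Real.Gamma (a + b)) := by
  have h := intervalIntegral.smul_integral_comp_mul_left
    (f := fun ξ => ξ ^ (a - 1) * (t - ξ) ^ (b - 1)) (a := 0) (b := 1) (c := t)
  rw [mul_zero, mul_one] at h
  rw [← h, smul_eq_mul]
  have h2 : ∫ x in (0:ℝ)..1, (t * x) ^ (a - 1) * (t - t * x) ^ (b - 1) =
      ∫ x in (0:ℝ)..1, t ^ (a - 1) * t ^ (b - 1) * (x ^ (a - 1) * (1 - x) ^ (b - 1)) := by
    apply intervalIntegral.integral_congr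
    intro x hx
    rw [Set.uIcc_of_le (by norm_num : (0:ℝ) ≤ 1)] at hx
    obtain ⟨hx0, hx1⟩ := hx
    dsimp only
    rw [show t - t * x = t * (1 - x) by ring,
      Real.mul_rpow ht.le hx0, Real.mul_rpow ht.le (by linarith)]
    ring
  rw [h2, intervalIntegral.integral_const_mul, real_beta ha hb]
  rw [← Real.rpow_add ht, ← mul_assoc, mul_comm t, ← Real.rpow_add_one (ne_of_gt ht),
    show a - 1 + (b - 1) + 1 = a + b - 1 by ring]

lemma term_integrable {a e t : ℝ} (ha : 0 < a) (he : 0 ≤ e) (ht : 0 < t) :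
    IntegrableOn (fun ξ => ξ ^ (a - 1) * (t - ξ) ^ e) (Set.Ioo 0 t) := by
  have h1 : IntegrableOn (fun ξ : ℝ => ξ ^ (a - 1)) (Set.Ioo 0 t) := by
    have h := intervalIntegral.intervalIntegrable_rpow' (a := 0) (b := t)
      (r := a - 1) (by linarith)
    rw [intervalIntegrable_iff_integrableOn_Ioc_of_le ht.le] at h
    exact h.mono_set Set.Ioo_subset_Ioc_self
  have hmeas : AEStronglyMeasurable (fun ξ : ℝ => (t - ξ) ^ e)
      (volume.restrict (Set.Ioo 0 t)) :=
    (((Real.continuous_rpow_const he).comp (continuous_const.sub continuous_id)).measurable).aestronglyMeasurable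
  have key : Integrable (fun ξ : ℝ => (t - ξ) ^ e * ξ ^ (a - 1))
      (volume.restrict (Set.Ioo 0 t)) := by
    apply Integrable.bdd_mul (c := t ^ e) h1 hmeas
    filter_upwards [ae_restrict_mem measurableSet_Ioo] with ξ hξ
    rw [Real.norm_of_nonneg (Real.rpow_nonneg (by linarith [hξ.2]) e)]
    exact Real.rpow_le_rpow (by linarith [hξ.2]) (by linarith [hξ.1]) he
  exact key.congr (Filter.Eventually.of_forall (fun x => mul_comm _ _))

lemma term_integral {a e t : ℝ} (ha : 0 < a) (he : 0 ≤ e) (ht : 0 < t) :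
    ∫ ξ in Set.Ioo 0 t, ξ ^ (a - 1) * (t - ξ) ^ e =
      t ^ (a + e) * (Real.Gamma a * Real.Gamma (e + 1) / Real.Gamma (a + e + 1)) := by
  rw [← integral_Ioc_eq_integral_Ioo, ← intervalIntegral.integral_of_le ht.le]
  have hb : (0:ℝ) < e + 1 := by linarith
  have := real_beta_scaled (t := t) ha hb ht
  rw [show e + 1 - 1 = e by ring] at this
  rw [this, show a + (e+1) - 1 = a + e by ring, show a + (e+1) = a + e + 1 by ring]


lemma gamma_arg_pos {α : ℝ} (hα0 : 0 < α) {x : ℝ} (hx : 0 ≤ x) :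
    0 < Real.Gamma (α * x + 1) :=
  Real.Gamma_pos_of_pos (by nlinarith)

/-- Geometric sum over the antidiagonal. -/
lemma sum_antidiag_pow (k : ℕ) :
    ∑ p ∈ Finset.HasAntidiagonal.antidiagonal k, (2:ℝ) ^ p.2 = 2 ^ (k+1) - 1 := by
  rw [Finset.Nat.sum_antidiagonal_eq_sum_range_succ_mk]
  have h := Finset.sum_range_reflect (fun j => (2:ℝ) ^ j) (k+1)
  calc ∑ i ∈ Finset.range (k+1), (2:ℝ) ^ (k - i)
      = ∑ j ∈ Finset.range (k+1), (2:ℝ) ^ j := by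
        rw [← h]
        apply Finset.sum_congr rfl
        intro i hi
        congr 1
    _ = 2 ^ (k+1) - 1 := by
        rw [geom_sum_eq (by norm_num : (2:ℝ) ≠ 1)]
        norm_num

noncomputable def mlG (α t : ℝ) (p : ℕ × ℕ) : ℝ :=
  2 ^ p.2 * (t ^ (α * ((p.1:ℝ) + p.2 + 1)) / Real.Gamma (α * ((p.1:ℝ) + p.2 + 1) + 1))

noncomputable def mlH (α t : ℝ) (p : ℕ × ℕ) : ℝ :=
  (-1) ^ p.1 * (-2) ^ p.2 * (t ^ (α * ((p.1:ℝ) + p.2 + 1)) / Real.Gamma (α * ((p.1:ℝ) + p.2 + 1) + 1))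

lemma mlG_sum (α t : ℝ) (k : ℕ) :
    ∑ p ∈ Finset.HasAntidiagonal.antidiagonal k, mlG α t p =
      (2 ^ (k+1) - 1) * (t ^ (α * ((k:ℝ) + 1)) / Real.Gamma (α * ((k:ℝ) + 1) + 1)) := by
  rw [show ∑ p ∈ Finset.HasAntidiagonal.antidiagonal k, mlG α t p =
      ∑ p ∈ Finset.HasAntidiagonal.antidiagonal k,
        (2:ℝ) ^ p.2 * (t ^ (α * ((k:ℝ) + 1)) / Real.Gamma (α * ((k:ℝ) + 1) + 1)) from
    Finset.sum_congr rfl fun p hp => by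
      rw [Finset.HasAntidiagonal.mem_antidiagonal] at hp
      have hc : (p.1:ℝ) + p.2 = k := by exact_mod_cast congrArg (Nat.cast : ℕ → ℝ) hp
      rw [mlG, hc]]
  rw [← Finset.sum_mul, sum_antidiag_pow]

lemma mlH_sum (α t : ℝ) (k : ℕ) :
    ∑ p ∈ Finset.HasAntidiagonal.antidiagonal k, mlH α t p =
      (-1) ^ k * (2 ^ (k+1) - 1) *
        (t ^ (α * ((k:ℝ) + 1)) / Real.Gamma (α * ((k:ℝ) + 1) + 1)) := by
  rw [show ∑ p ∈ Finset.HasAntidiagonal.antidiagonal k, mlH α t p =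
      ∑ p ∈ Finset.HasAntidiagonal.antidiagonal k,
        ((-1:ℝ)) ^ k * ((2:ℝ) ^ p.2 * (t ^ (α * ((k:ℝ) + 1)) / Real.Gamma (α * ((k:ℝ) + 1) + 1))) from
    Finset.sum_congr rfl fun p hp => by
      rw [Finset.HasAntidiagonal.mem_antidiagonal] at hp
      have hc : (p.1:ℝ) + p.2 = k := by exact_mod_cast congrArg (Nat.cast : ℕ → ℝ) hp
      rw [mlH, hc, show ((-2:ℝ)) ^ p.2 = (-1:ℝ)^p.2 * 2^p.2 by rw [← neg_one_mul, mul_pow],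
        ← hp, pow_add]
      ring]
  rw [← Finset.mul_sum, ← Finset.sum_mul, sum_antidiag_pow]
  ring

lemma R_summable {α t : ℝ} (hα0 : 0 < α) (hα1 : α ≤ 1) (ht : 0 < t) :
    Summable (fun k : ℕ => ((2:ℝ) ^ (k+1) - 1) *
      (t ^ (α * ((k:ℝ) + 1)) / Real.Gamma (α * ((k:ℝ) + 1) + 1))) := by
  have hml := (ml_summable_norm hα0 hα1 (by linarith : (0:ℝ) < α + 1) (2 * t ^ α)).mul_left
    (2 * t ^ α)
  apply Summable.of_nonneg_of_le ?_ ?_ hml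
  · intro k
    have h1 : (1:ℝ) ≤ 2 ^ (k+1) := one_le_pow₀ (by norm_num)
    have hg : 0 < Real.Gamma (α * ((k:ℝ) + 1) + 1) := gamma_arg_pos hα0 (by positivity)
    have htp : (0:ℝ) ≤ t ^ (α * ((k:ℝ) + 1)) := Real.rpow_nonneg ht.le _
    have h0 : (0:ℝ) ≤ 2 ^ (k+1) - 1 := by linarith
    positivity
  · intro k
    have htα : (0:ℝ) < t ^ α := Real.rpow_pos_of_pos ht α
    have habs : |2 * t ^ α| = 2 * t ^ α := abs_of_pos (by positivity)
    have harg : α * ((k:ℝ)) + (α + 1) = α * ((k:ℝ) + 1) + 1 := by ring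
    have hg : 0 < Real.Gamma (α * ((k:ℝ) + 1) + 1) := gamma_arg_pos hα0 (by positivity)
    have hexp : t ^ (α * ((k:ℝ) + 1)) = t ^ α * (t ^ α) ^ k := by
      rw [← Real.rpow_natCast (t ^ α) k, ← Real.rpow_mul ht.le, ← Real.rpow_add ht]
      ring_nf
    rw [habs, harg, hexp, mul_pow]
    have h2 : ((2:ℝ) ^ (k+1) - 1) ≤ 2 * 2 ^ k := by
      rw [pow_succ]; nlinarith [pow_pos (by norm_num : (0:ℝ) < 2) k]
    calc ((2:ℝ) ^ (k+1) - 1) * (t ^ α * (t ^ α) ^ k / Real.Gamma (α * ((k:ℝ) + 1) + 1))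
        ≤ 2 * 2 ^ k * (t ^ α * (t ^ α) ^ k / Real.Gamma (α * ((k:ℝ) + 1) + 1)) := by
          apply mul_le_mul_of_nonneg_right h2 (by positivity)
      _ = 2 * t ^ α * (2 ^ k * (t ^ α) ^ k / Real.Gamma (α * ((k:ℝ) + 1) + 1)) := by
          ring

lemma mlG_nonneg {α t : ℝ} (hα0 : 0 < α) (ht : 0 < t) (p : ℕ × ℕ) : 0 ≤ mlG α t p := by
  have hg : 0 < Real.Gamma (α * ((p.1:ℝ) + p.2 + 1) + 1) := gamma_arg_pos hα0 (by positivity)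
  have htp : (0:ℝ) ≤ t ^ (α * ((p.1:ℝ) + p.2 + 1)) := Real.rpow_nonneg ht.le _
  rw [mlG]; positivity

lemma mlG_summable {α t : ℝ} (hα0 : 0 < α) (hα1 : α ≤ 1) (ht : 0 < t) :
    Summable (mlG α t) := by
  rw [← Equiv.summable_iff (Finset.HasAntidiagonal.sigmaAntidiagonalEquivProd (A := ℕ))]
  have hnn : ∀ σ : (Σ k : ℕ, {x // x ∈ Finset.HasAntidiagonal.antidiagonal k}),
      0 ≤ (mlG α t ∘ Finset.HasAntidiagonal.sigmaAntidiagonalEquivProd) σ :=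
    fun σ => mlG_nonneg hα0 ht _
  rw [summable_sigma_of_nonneg hnn]
  refine ⟨fun k => (hasSum_fintype _).summable, ?_⟩
  apply Summable.congr (R_summable hα0 hα1 ht)
  intro k
  rw [← mlG_sum α t k, ← Finset.tsum_subtype (Finset.HasAntidiagonal.antidiagonal k) (mlG α t)]
  rfl

lemma mlH_norm {α t : ℝ} (hα0 : 0 < α) (ht : 0 < t) (p : ℕ × ℕ) : ‖mlH α t p‖ = mlG α t p := by
  have hg : 0 < Real.Gamma (α * ((p.1:ℝ) + p.2 + 1) + 1) := gamma_arg_pos hα0 (by positivity)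
  rw [mlH, mlG, Real.norm_eq_abs, abs_mul, abs_mul, abs_pow, abs_pow, abs_neg, abs_one,
    one_pow, abs_neg, abs_of_pos (by norm_num : (0:ℝ) < 2),
    abs_div, abs_of_pos hg, abs_of_nonneg (Real.rpow_nonneg ht.le _), one_mul]

lemma mlH_summable {α t : ℝ} (hα0 : 0 < α) (hα1 : α ≤ 1) (ht : 0 < t) :
    Summable (mlH α t) := by
  apply Summable.of_norm
  exact (mlG_summable hα0 hα1 ht).congr (fun p => (mlH_norm hα0 ht p).symm)

lemma mlH_tsum {α t : ℝ} (hα0 : 0 < α) (hα1 : α ≤ 1) (ht : 0 < t) :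
    ∑' p : ℕ × ℕ, mlH α t p = ∑' k : ℕ, (-1) ^ k * (2 ^ (k+1) - 1) *
      (t ^ (α * ((k:ℝ) + 1)) / Real.Gamma (α * ((k:ℝ) + 1) + 1)) := by
  rw [← Equiv.tsum_eq (Finset.HasAntidiagonal.sigmaAntidiagonalEquivProd (A := ℕ)) (mlH α t)]
  have hsig : Summable (fun σ : (Σ k : ℕ, {x // x ∈ Finset.HasAntidiagonal.antidiagonal k}) =>
      mlH α t ((σ.2 : ℕ × ℕ))) :=
    ((Equiv.summable_iff (Finset.HasAntidiagonal.sigmaAntidiagonalEquivProd (A := ℕ))).2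
      (mlH_summable hα0 hα1 ht)).congr (fun σ => rfl)
  calc ∑' σ : (Σ k : ℕ, {x // x ∈ Finset.HasAntidiagonal.antidiagonal k}),
        mlH α t (Finset.HasAntidiagonal.sigmaAntidiagonalEquivProd σ)
      = ∑' (k : ℕ) (c : {x // x ∈ Finset.HasAntidiagonal.antidiagonal k}), mlH α t (c : ℕ × ℕ) :=
        hsig.tsum_sigma
    _ = ∑' k : ℕ, (-1) ^ k * (2 ^ (k+1) - 1) *
        (t ^ (α * ((k:ℝ) + 1)) / Real.Gamma (α * ((k:ℝ) + 1) + 1)) := by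
        apply tsum_congr
        intro k
        rw [Finset.tsum_subtype (Finset.HasAntidiagonal.antidiagonal k) (mlH α t), mlH_sum]

noncomputable def mlF (α t : ℝ) (p : ℕ × ℕ) (ξ : ℝ) : ℝ :=
  (-1) ^ p.1 * (-2) ^ p.2 / (Real.Gamma (α * p.1 + α) * Real.Gamma (α * p.2 + 1)) *
    (ξ ^ (α * ((p.1:ℝ) + 1) - 1) * (t - ξ) ^ (α * (p.2:ℝ)))

section pieces
variable {α t : ℝ} (hα0 : 0 < α) (hα1 : α < 1) (ht : 0 < t)

lemma mlF_pointwise (hα0 : 0 < α) (hα1 : α < 1) (ht : 0 < t) {ξ : ℝ} (hξ : ξ ∈ Set.Ioo 0 t) :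
    ξ ^ (α - 1) * mittagLeffler2 α α (-(ξ ^ α)) * mittagLeffler α (-2 * (t - ξ) ^ α) =
      ∑' p : ℕ × ℕ, mlF α t p ξ := by
  obtain ⟨hξ0, hξt⟩ := hξ
  have htξ : 0 < t - ξ := by linarith
  rw [mittagLeffler2, mittagLeffler, mul_assoc,
    tsum_mul_tsum_of_summable_norm (ml_summable_norm' hα0 hα1.le hα0 _)
      (ml_summable_norm' hα0 hα1.le one_pos _), ← tsum_mul_left]
  apply tsum_congr
  rintro ⟨m, n⟩
  have hΓ1 : Real.Gamma (α * (m:ℝ) + α) ≠ 0 := by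
    have h0 : (0:ℝ) < α * (m:ℝ) + α := by
      have : (0:ℝ) ≤ α * m := mul_nonneg hα0.le (Nat.cast_nonneg m)
      linarith
    exact (Real.Gamma_pos_of_pos h0).ne'
  have hΓ2 : Real.Gamma (α * (n:ℝ) + 1) ≠ 0 := (gamma_arg_pos hα0 (Nat.cast_nonneg n)).ne'
  have e1 : (-(ξ ^ α)) ^ m = (-1:ℝ) ^ m * ξ ^ (α * (m:ℝ)) := by
    rw [neg_pow, ← Real.rpow_natCast (ξ ^ α) m, ← Real.rpow_mul hξ0.le]
  have e2 : (-2 * (t - ξ) ^ α) ^ n = (-2:ℝ) ^ n * (t - ξ) ^ (α * (n:ℝ)) := by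
    rw [mul_pow, ← Real.rpow_natCast ((t - ξ) ^ α) n, ← Real.rpow_mul htξ.le]
  have e3 : ξ ^ (α - 1) * ξ ^ (α * (m:ℝ)) = ξ ^ (α * ((m:ℝ) + 1) - 1) := by
    rw [← Real.rpow_add hξ0]; congr 1; ring
  calc ξ ^ (α - 1) * ((-(ξ ^ α)) ^ m / Real.Gamma (α * (m:ℝ) + α) *
        ((-2 * (t - ξ) ^ α) ^ n / Real.Gamma (α * (n:ℝ) + 1)))
      = (-1:ℝ) ^ m * (-2:ℝ) ^ n / (Real.Gamma (α * (m:ℝ) + α) * Real.Gamma (α * (n:ℝ) + 1)) *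
          ((ξ ^ (α - 1) * ξ ^ (α * (m:ℝ))) * (t - ξ) ^ (α * (n:ℝ))) := by
        rw [e1, e2]; field_simp
    _ = mlF α t (m, n) ξ := by rw [e3, mlF]

lemma mlF_integrable (hα0 : 0 < α) (ht : 0 < t) (p : ℕ × ℕ) :
    IntegrableOn (mlF α t p) (Set.Ioo 0 t) := by
  have ha : (0:ℝ) < α * ((p.1:ℝ) + 1) := mul_pos hα0 (by positivity)
  have he : (0:ℝ) ≤ α * (p.2:ℝ) := mul_nonneg hα0.le (Nat.cast_nonneg _)
  exact (term_integrable ha he ht).const_mul _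

lemma mlF_norm_integral (hα0 : 0 < α) (ht : 0 < t) (p : ℕ × ℕ) :
    ∫ ξ in Set.Ioo 0 t, ‖mlF α t p ξ‖ = mlG α t p := by
  obtain ⟨m, n⟩ := p
  have ha : (0:ℝ) < α * ((m:ℝ) + 1) := mul_pos hα0 (by positivity)
  have he : (0:ℝ) ≤ α * (n:ℝ) := mul_nonneg hα0.le (Nat.cast_nonneg _)
  have hΓ1 : (0:ℝ) < Real.Gamma (α * (m:ℝ) + α) := by
    apply Real.Gamma_pos_of_pos
    have : (0:ℝ) ≤ α * m := mul_nonneg hα0.le (Nat.cast_nonneg m)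
    linarith
  have hΓ2 : (0:ℝ) < Real.Gamma (α * (n:ℝ) + 1) := gamma_arg_pos hα0 (Nat.cast_nonneg n)
  have hC : |(-1:ℝ) ^ m * (-2:ℝ) ^ n / (Real.Gamma (α * (m:ℝ) + α) * Real.Gamma (α * (n:ℝ) + 1))|
      = 2 ^ n / (Real.Gamma (α * (m:ℝ) + α) * Real.Gamma (α * (n:ℝ) + 1)) := by
    rw [abs_div, abs_mul, abs_pow, abs_pow, abs_neg, abs_one, one_pow, abs_neg,
      abs_of_pos (by norm_num : (0:ℝ) < 2), abs_of_pos (by positivity), one_mul]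
  have hcong : ∀ ξ ∈ Set.Ioo (0:ℝ) t, ‖mlF α t (m, n) ξ‖ =
      2 ^ n / (Real.Gamma (α * (m:ℝ) + α) * Real.Gamma (α * (n:ℝ) + 1)) *
        (ξ ^ (α * ((m:ℝ) + 1) - 1) * (t - ξ) ^ (α * (n:ℝ))) := by
    intro ξ hξ
    obtain ⟨hξ0, hξt⟩ := hξ
    have h1 : (0:ℝ) ≤ ξ ^ (α * ((m:ℝ) + 1) - 1) := Real.rpow_nonneg hξ0.le _
    have h2 : (0:ℝ) ≤ (t - ξ) ^ (α * (n:ℝ)) := Real.rpow_nonneg (by linarith) _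
    rw [mlF, Real.norm_eq_abs, abs_mul, hC, abs_of_nonneg (mul_nonneg h1 h2)]
  rw [setIntegral_congr_fun measurableSet_Ioo hcong, integral_const_mul, term_integral ha he ht]
  rw [mlG]
  rw [show α * ((m:ℝ) + 1) + α * (n:ℝ) = α * ((m:ℝ) + (n:ℝ) + 1) by ring,
    show α * ((m:ℝ) + 1) = α * (m:ℝ) + α by ring]
  have hΓ3 : (0:ℝ) < Real.Gamma (α * ((m:ℝ) + (n:ℝ) + 1) + 1) :=
    gamma_arg_pos hα0 (by positivity)
  field_simp

lemma mlF_integral (hα0 : 0 < α) (ht : 0 < t) (p : ℕ × ℕ) :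
    ∫ ξ in Set.Ioo 0 t, mlF α t p ξ = mlH α t p := by
  obtain ⟨m, n⟩ := p
  have ha : (0:ℝ) < α * ((m:ℝ) + 1) := mul_pos hα0 (by positivity)
  have he : (0:ℝ) ≤ α * (n:ℝ) := mul_nonneg hα0.le (Nat.cast_nonneg _)
  have hΓ1 : (0:ℝ) < Real.Gamma (α * (m:ℝ) + α) := by
    apply Real.Gamma_pos_of_pos
    have : (0:ℝ) ≤ α * m := mul_nonneg hα0.le (Nat.cast_nonneg m)
    linarith
  have hΓ2 : (0:ℝ) < Real.Gamma (α * (n:ℝ) + 1) := gamma_arg_pos hα0 (Nat.cast_nonneg n)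
  rw [show (fun ξ => mlF α t (m, n) ξ) = fun ξ =>
    (-1) ^ m * (-2) ^ n / (Real.Gamma (α * (m:ℝ) + α) * Real.Gamma (α * (n:ℝ) + 1)) *
      (ξ ^ (α * ((m:ℝ) + 1) - 1) * (t - ξ) ^ (α * (n:ℝ))) from rfl]
  rw [integral_const_mul, term_integral ha he ht, mlH]
  rw [show α * ((m:ℝ) + 1) + α * (n:ℝ) = α * ((m:ℝ) + (n:ℝ) + 1) by ring,
    show α * ((m:ℝ) + 1) = α * (m:ℝ) + α by ring]
  have hΓ3 : (0:ℝ) < Real.Gamma (α * ((m:ℝ) + (n:ℝ) + 1) + 1) :=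
    gamma_arg_pos hα0 (by positivity)
  field_simp

lemma rhs_tsum (hα0 : 0 < α) (hα1 : α < 1) (ht : 0 < t) :
    mittagLeffler α (-(t ^ α)) - mittagLeffler α (-2 * t ^ α) =
      ∑' k : ℕ, (-1) ^ k * (2 ^ (k+1) - 1) *
        (t ^ (α * ((k:ℝ) + 1)) / Real.Gamma (α * ((k:ℝ) + 1) + 1)) := by
  have h1 : Summable (fun j : ℕ => (-(t ^ α)) ^ j / Real.Gamma (α * j + 1)) :=
    ml_summable hα0 hα1.le one_pos _
  have h2 : Summable (fun j : ℕ => (-2 * t ^ α) ^ j / Real.Gamma (α * j + 1)) :=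
    ml_summable hα0 hα1.le one_pos _
  rw [mittagLeffler, mittagLeffler, ← h1.tsum_sub h2, (h1.sub h2).tsum_eq_zero_add]
  have hzero : (-(t ^ α)) ^ 0 / Real.Gamma (α * (0:ℕ) + 1) -
      (-2 * t ^ α) ^ 0 / Real.Gamma (α * (0:ℕ) + 1) = 0 := by
    simp
  rw [hzero, zero_add]
  apply tsum_congr
  intro k
  have hg : Real.Gamma (α * ((k:ℝ) + 1) + 1) ≠ 0 := (gamma_arg_pos hα0 (by positivity)).ne'
  have hexp : (t ^ α) ^ (k+1) = t ^ (α * ((k:ℝ) + 1)) := by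
    rw [← Real.rpow_natCast (t ^ α) (k+1), ← Real.rpow_mul ht.le]
    congr 1
    push_cast
    ring
  have hcast : α * ((k+1:ℕ):ℝ) + 1 = α * ((k:ℝ) + 1) + 1 := by push_cast; ring
  rw [hcast, neg_pow, mul_pow, neg_pow (2:ℝ), hexp]
  field_simp
  ring
end pieces

/-- For `0 < α < 1` and `t > 0`:
`∫₀ᵗ ξ^{α−1} E_{α,α}(−ξ^α) E_α(−2(t−ξ)^α) dξ = E_α(−t^α) − E_α(−2t^α)`. -/
theorem mittagLeffler_integral_identity (α t : ℝ) (hα0 : 0 < α) (hα1 : α < 1)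
    (ht : 0 < t) :
    ∫ ξ in (0 : ℝ)..t, ξ ^ (α - 1) * mittagLeffler2 α α (-(ξ ^ α)) *
        mittagLeffler α (-2 * (t - ξ) ^ α) =
      mittagLeffler α (-(t ^ α)) - mittagLeffler α (-2 * t ^ α) := by
  rw [intervalIntegral.integral_of_le ht.le, integral_Ioc_eq_integral_Ioo]
  have hInt : ∀ p : ℕ × ℕ, Integrable (mlF α t p) (volume.restrict (Set.Ioo 0 t)) :=
    fun p => mlF_integrable hα0 ht p
  have hNorm : Summable (fun p : ℕ × ℕ => ∫ ξ in Set.Ioo 0 t, ‖mlF α t p ξ‖) :=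
    (mlG_summable hα0 hα1.le ht).congr (fun p => (mlF_norm_integral hα0 ht p).symm)
  calc ∫ ξ in Set.Ioo 0 t, ξ ^ (α - 1) * mittagLeffler2 α α (-(ξ ^ α)) *
        mittagLeffler α (-2 * (t - ξ) ^ α)
      = ∫ ξ in Set.Ioo 0 t, ∑' p : ℕ × ℕ, mlF α t p ξ :=
        setIntegral_congr_fun measurableSet_Ioo (fun ξ hξ => mlF_pointwise hα0 hα1 ht hξ)
    _ = ∑' p : ℕ × ℕ, ∫ ξ in Set.Ioo 0 t, mlF α t p ξ :=
        (integral_tsum_of_summable_integral_norm hInt hNorm).symm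
    _ = ∑' p : ℕ × ℕ, mlH α t p := tsum_congr (fun p => mlF_integral hα0 ht p)
    _ = ∑' k : ℕ, (-1) ^ k * (2 ^ (k+1) - 1) *
        (t ^ (α * ((k:ℝ) + 1)) / Real.Gamma (α * ((k:ℝ) + 1) + 1)) := mlH_tsum hα0 hα1.le ht
    _ = mittagLeffler α (-(t ^ α)) - mittagLeffler α (-2 * t ^ α) := (rhs_tsum hα0 hα1 ht).symm
end
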